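/- arXiv:2210.15622 — 6 statements merged into one kernel-verified Lean document; each statement's English description precedes it below -/
import Mathlib

section
/- Let d ≥ 2 and let ℓ be a d-variate stable tail dependence function in d-norm form, i.e. ℓ(x) = E[max_{1≤i≤d} x_i W_i] for some integrable, almost surely positive random variables W_1,…,W_d each with mean 1. Let S = (S_1,…,S_d) be a random vector whose joint survival function is P(S_1 > s_1, …, S_d > s_d) = (max(0, 1 − ℓ(s_1,…,s_d)))^{d−1} for all s ∈ [0,∞)^d, and set c_n = (1 − (1 − 1/n)^{1/(d−1)})^{−1} for n ≥ 2. Then for every s = (s_1,…,s_d) with all s_i > 0, n·(1 − P(1/S_1 ≤ c_n s_1, …, 1/S_d ≤ c_n s_d)) → ℓ(1/s_1,…,1/s_d) as n → ∞. In particular, 1/S is in the maximum domain of attraction of a multivariate extreme-value distribution with unit Fréchet margins and stable tail dependence function ℓ. -/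
open MeasureTheory ProbabilityTheory Filter
open scoped Topology

/-- If `S` has the `ℓ`-simplex distribution for a stdf `ℓ` in d-norm form,
and `c n = (1 - (1 - 1/n)^(1/(d-1)))⁻¹`, then for every coordinatewise positive `s`,
`n * (1 - P(1/S₁ ≤ cₙ s₁, …, 1/S_d ≤ cₙ s_d)) → ℓ(1/s₁, …, 1/s_d)`; in particular `1/S` is
in the maximum domain of attraction of a multivariate extreme-value distribution with unit
Fréchet margins and stable tail dependence function `ℓ`. -/
theorem stmt_0
    {Ω : Type*} [MeasurableSpace Ω] (μ : Measure Ω) [IsProbabilityMeasure μ]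
    (d : ℕ) (hd : 2 ≤ d)
    (W : Fin d → Ω → ℝ)
    (hWmeas : ∀ i, Measurable (W i))
    (hWint : ∀ i, Integrable (W i) μ)
    (hWpos : ∀ i, ∀ᵐ ω ∂μ, 0 < W i ω)
    (hWmean : ∀ i, ∫ ω, W i ω ∂μ = 1)
    (ℓ : (Fin d → ℝ) → ℝ)
    (hℓ : ∀ x : Fin d → ℝ, ℓ x = ∫ ω, (⨆ i, x i * W i ω) ∂μ)
    (S : Fin d → Ω → ℝ)
    (hSmeas : ∀ i, Measurable (S i))
    (hSsurv : ∀ s : Fin d → ℝ, (∀ i, 0 ≤ s i) →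
      (μ {ω | ∀ i, s i < S i ω}).toReal = max 0 (1 - ℓ s) ^ (d - 1))
    (c : ℕ → ℝ)
    (hc : ∀ n : ℕ, 2 ≤ n →
      c n = (1 - (1 - 1 / (n : ℝ)) ^ (1 / ((d : ℝ) - 1)))⁻¹)
    (s : Fin d → ℝ) (hs : ∀ i, 0 < s i) :
    Tendsto
      (fun n : ℕ =>
        (n : ℝ) * (1 - (μ {ω | ∀ i, 1 / S i ω ≤ c n * s i}).toReal))
      atTop (𝓝 (ℓ (fun i => 1 / s i))) := by
  have hne : Nonempty (Fin d) := ⟨⟨0, by omega⟩⟩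
  have i0 : Fin d := ⟨0, by omega⟩
  set k := d - 1 with hk
  have hkpos : 0 < k := by omega
  have hkR : ((k : ℝ)) = (d : ℝ) - 1 := by
    rw [hk, Nat.cast_sub (by omega)]; norm_num
  have hdR : (0:ℝ) < (d:ℝ) - 1 := by
    have : (2:ℝ) ≤ (d:ℝ) := by exact_mod_cast hd
    linarith
  -- integrability of suprema
  have hint : ∀ x : Fin d → ℝ, Integrable (fun ω => ⨆ i, x i * W i ω) μ := by
    intro x
    have hmeas : Measurable (fun ω => ⨆ i, x i * W i ω) :=
      Measurable.iSup (fun i => (hWmeas i).const_mul _)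
    refine Integrable.mono' (g := fun ω => ∑ i, |x i * W i ω|)
      (integrable_finset_sum _ fun i _ => ((hWint i).const_mul _).abs)
      hmeas.aestronglyMeasurable ?_
    filter_upwards with ω
    rw [Real.norm_eq_abs, abs_le]
    constructor
    · have h0 : x i0 * W i0 ω ≤ ⨆ i, x i * W i ω :=
        le_ciSup (f := fun i => x i * W i ω) (Set.Finite.bddAbove (Set.finite_range _)) i0
      have h1 : |x i0 * W i0 ω| ≤ ∑ i, |x i * W i ω| :=
        Finset.single_le_sum (f := fun i => |x i * W i ω|) (fun i _ => abs_nonneg _)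
          (Finset.mem_univ i0)
      have := neg_abs_le (x i0 * W i0 ω)
      linarith
    · exact ciSup_le fun i => (le_abs_self _).trans
        (Finset.single_le_sum (f := fun j => |x j * W j ω|) (fun j _ => abs_nonneg _)
          (Finset.mem_univ i))
  have hWposAll : ∀ᵐ ω ∂μ, ∀ i, 0 < W i ω := ae_all_iff.2 hWpos
  -- monotonicity of ℓ
  have hmono : ∀ x y : Fin d → ℝ, (∀ i, x i ≤ y i) → ℓ x ≤ ℓ y := by
    intro x y hxy
    rw [hℓ, hℓ]
    refine integral_mono_ae (hint x) (hint y) ?_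
    filter_upwards [hWposAll] with ω hω
    exact ciSup_mono (Set.Finite.bddAbove (Set.finite_range _))
      fun i => mul_le_mul_of_nonneg_right (hxy i) (hω i).le
  -- diagonal-shift bound
  have hshift : ∀ (x : Fin d → ℝ) (η : ℝ), 0 ≤ η → ℓ x ≤ ℓ (fun i => x i - η) + η * d := by
    intro x η hη
    rw [hℓ, hℓ]
    have hsum : Integrable (fun ω => η * ∑ j, W j ω) μ :=
      (integrable_finset_sum _ fun j _ => hWint j).const_mul η
    have heq : ∫ ω, (⨆ i, (x i - η) * W i ω) ∂μ + η * (d:ℝ)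
        = ∫ ω, ((⨆ i, (x i - η) * W i ω) + η * ∑ j, W j ω) ∂μ := by
      rw [integral_add (hint _) hsum, integral_const_mul,
        integral_finset_sum _ (fun j _ => hWint j)]
      simp [hWmean]
    rw [heq]
    refine integral_mono_ae (hint x) ((hint _).add hsum) ?_
    filter_upwards [hWposAll] with ω hω
    refine ciSup_le fun i => ?_
    have h1 : (x i - η) * W i ω ≤ ⨆ j, (x j - η) * W j ω :=
      le_ciSup (f := fun j => (x j - η) * W j ω) (Set.Finite.bddAbove (Set.finite_range _)) i
    have h2 : W i ω ≤ ∑ j, W j ω :=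
      Finset.single_le_sum (f := fun j => W j ω) (fun j _ => (hω j).le) (Finset.mem_univ i)
    nlinarith [(hω i).le]
  -- homogeneity
  have hhomog : ∀ (x : Fin d → ℝ) (ε : ℝ), 0 ≤ ε → ℓ (fun i => ε * x i) = ε * ℓ x := by
    intro x ε hε
    rw [hℓ, hℓ, ← integral_const_mul]
    congr 1
    funext ω
    rw [Real.mul_iSup_of_nonneg hε]
    exact iSup_congr fun i => by ring
  -- positivity of a := ℓ (1/s)
  set a := ℓ (fun i => 1 / s i) with ha
  have hapos : 0 < a := by
    have h1 : (1 / s i0) = ∫ ω, (1 / s i0) * W i0 ω ∂μ := by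
      rw [integral_const_mul, hWmean, mul_one]
    have hle : ∫ ω, (1 / s i0) * W i0 ω ∂μ ≤ a := by
      rw [ha, hℓ]
      refine integral_mono_ae ((hWint i0).const_mul _) (hint _) ?_
      filter_upwards with ω
      exact le_ciSup (f := fun i => (1 / s i) * W i ω)
        (Set.Finite.bddAbove (Set.finite_range _)) i0
    have h2 : 0 < 1 / s i0 := one_div_pos.2 (hs i0)
    linarith
  -- a.s. positivity of S
  have hSposAe : ∀ᵐ ω ∂μ, ∀ i, 0 < S i ω := by
    have hℓ0 : ℓ (fun _ => (0:ℝ)) = 0 := by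
      rw [hℓ]; simp
    have h := hSsurv (fun _ => 0) (fun _ => le_refl 0)
    rw [hℓ0] at h
    norm_num at h
    have hG1 : μ {ω | ∀ i, (0:ℝ) < S i ω} = 1 := (ENNReal.toReal_eq_one_iff _).1 h
    have hGmeas : MeasurableSet {ω | ∀ i, (0:ℝ) < S i ω} := by
      have : {ω | ∀ i, (0:ℝ) < S i ω} = ⋂ i, (S i) ⁻¹' (Set.Ioi 0) := by
        ext ω; simp [Set.mem_iInter]
      rw [this]
      exact MeasurableSet.iInter fun i => (hSmeas i) measurableSet_Ioi
    rw [ae_iff]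
    have : {ω | ¬ ∀ i, (0:ℝ) < S i ω} = {ω | ∀ i, (0:ℝ) < S i ω}ᶜ := rfl
    rw [this, measure_compl hGmeas (measure_ne_top μ _), hG1, measure_univ, tsub_self]
  -- closed-orthant survival function
  have hclosed : ∀ t : Fin d → ℝ, (∀ i, 0 < t i) →
      (μ {ω | ∀ i, t i ≤ S i ω}).toReal = max 0 (1 - ℓ t) ^ k := by
    intro t ht
    set A : ℕ → Set Ω := fun m => {ω | ∀ i, t i - 1/(m+1) < S i ω} with hA
    have hAmeas : ∀ m, MeasurableSet (A m) := by
      intro m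
      have : A m = ⋂ i, (S i) ⁻¹' (Set.Ioi (t i - 1/(m+1))) := by
        ext ω; simp [hA, Set.mem_iInter]
      rw [this]
      exact MeasurableSet.iInter fun i => (hSmeas i) measurableSet_Ioi
    have hAanti : Antitone A := by
      intro m m' hmm' ω hω i
      refine lt_of_le_of_lt ?_ (hω i)
      have h1 : (1:ℝ)/(m'+1) ≤ 1/(m+1) := by
        apply one_div_le_one_div_of_le
        · positivity
        · exact_mod_cast by omega
      linarith
    have hAinter : ⋂ m, A m = {ω | ∀ i, t i ≤ S i ω} := by
      ext ω
      simp only [Set.mem_iInter, hA, Set.mem_setOf_eq]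
      constructor
      · intro h i
        by_contra hlt
        push_neg at hlt
        obtain ⟨m, hm⟩ := exists_nat_one_div_lt (by linarith : (0:ℝ) < t i - S i ω)
        have := h m i
        linarith
      · intro h m i
        have h1 := h i
        have h2 : (0:ℝ) < 1/((m:ℝ)+1) := by positivity
        linarith
    have htend := tendsto_measure_iInter_atTop
      (fun m => (hAmeas m).nullMeasurableSet) hAanti ⟨0, measure_ne_top μ _⟩
    rw [hAinter] at htend
    have htoReal : Tendsto (fun m => (μ (A m)).toReal) atTop
        (𝓝 ((μ {ω | ∀ i, t i ≤ S i ω}).toReal)) :=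
      (ENNReal.tendsto_toReal (measure_ne_top μ _)).comp htend
    -- ℓ continuity along the shift
    have hnn : Tendsto (fun m : ℕ => (1:ℝ)/(m+1)) atTop (𝓝 0) :=
      tendsto_one_div_add_atTop_nhds_zero_nat
    have hev : ∀ᶠ m : ℕ in atTop, ∀ i, (1:ℝ)/(m+1) ≤ t i := by
      rw [eventually_all]
      intro i
      exact (hnn.eventually_lt_const (ht i)).mono fun m hm => hm.le
    have hℓtend : Tendsto (fun m : ℕ => ℓ (fun i => t i - 1/(m+1))) atTop (𝓝 (ℓ t)) := by
      have hlow : Tendsto (fun m : ℕ => ℓ t - (1/(m+1)) * d) atTop (𝓝 (ℓ t)) := by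
        have := (hnn.mul_const (d:ℝ)).const_sub (ℓ t)
        simpa using this
      refine tendsto_of_tendsto_of_tendsto_of_le_of_le' hlow tendsto_const_nhds ?_ ?_
      · filter_upwards with m
        have := hshift t (1/(m+1)) (by positivity)
        linarith
      · filter_upwards with m
        exact hmono _ _ fun i => by
          have h2 : (0:ℝ) < 1/((m:ℝ)+1) := by positivity
          linarith
    have hFtend : Tendsto (fun m : ℕ => max 0 (1 - ℓ (fun i => t i - 1/(m+1))) ^ k)
        atTop (𝓝 (max 0 (1 - ℓ t) ^ k)) :=
      ((tendsto_const_nhds.max (tendsto_const_nhds.sub hℓtend))).pow k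
    refine tendsto_nhds_unique (htoReal.congr' ?_) hFtend
    filter_upwards [hev] with m hm
    exact hSsurv (fun i => t i - 1/(m+1)) (fun i => by linarith [hm i])
  -- the sequence ε
  set ε : ℕ → ℝ := fun n => 1 - (1 - 1/(n:ℝ)) ^ (1/((d:ℝ)-1)) with hεdef
  have hbase : ∀ n : ℕ, 2 ≤ n → 0 ≤ 1 - 1/(n:ℝ) ∧ 1 - 1/(n:ℝ) < 1 := by
    intro n hn
    have h1 : (2:ℝ) ≤ (n:ℝ) := by exact_mod_cast hn
    constructor
    · have : 1/(n:ℝ) ≤ 1 := by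
        rw [div_le_one (by linarith)]; linarith
      linarith
    · have : 0 < 1/(n:ℝ) := by positivity
      linarith
  have hεpos : ∀ n : ℕ, 2 ≤ n → 0 < ε n := by
    intro n hn
    obtain ⟨h0, h1⟩ := hbase n hn
    have h2 : (1 - 1/(n:ℝ)) ^ (1/((d:ℝ)-1)) < 1 :=
      Real.rpow_lt_one h0 h1 (by positivity)
    simp only [hεdef]
    linarith
  have hεkey : ∀ n : ℕ, 2 ≤ n → 1 - (1 - ε n) ^ k = 1/(n:ℝ) := by
    intro n hn
    obtain ⟨h0, _⟩ := hbase n hn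
    have h1 : 1 - ε n = (1 - 1/(n:ℝ)) ^ (1/((d:ℝ)-1)) := by simp [hεdef]
    rw [h1, ← Real.rpow_natCast ((1 - 1/(n:ℝ)) ^ (1/((d:ℝ)-1))) k, ← Real.rpow_mul h0,
      hkR, one_div ((d:ℝ)-1), inv_mul_cancel₀ hdR.ne', Real.rpow_one]
    ring
  have hεtend : Tendsto ε atTop (𝓝 0) := by
    have h1 : Tendsto (fun n : ℕ => 1 - 1/(n:ℝ)) atTop (𝓝 (1 - 0)) :=
      tendsto_const_nhds.sub tendsto_one_div_atTop_nhds_zero_nat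
    rw [sub_zero] at h1
    have h2 : ContinuousAt (fun x : ℝ => x ^ (1/((d:ℝ)-1))) 1 :=
      Real.continuousAt_rpow_const 1 _ (Or.inl one_ne_zero)
    have h4 := (h2.tendsto.comp h1).const_sub 1
    have h5 : (1:ℝ) - 1 ^ (1/((d:ℝ)-1)) = 0 := by rw [Real.one_rpow]; ring
    rw [h5] at h4
    exact h4
  -- limit of g
  set g : ℝ → ℝ := fun x => (1 - (1-x)^k) / x with hg
  have hgtend : Tendsto g (𝓝[≠] 0) (𝓝 (k:ℝ)) := by
    have hderiv : HasDerivAt (fun x : ℝ => 1 - (1-x)^k) (k:ℝ) 0 := by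
      have h1 : HasDerivAt (fun x : ℝ => 1 - x) (-1) 0 := (hasDerivAt_id 0).const_sub 1
      have h2 := (h1.pow k).const_sub 1
      exact h2.congr_deriv (by simp)
    have hslope := hasDerivAt_iff_tendsto_slope.1 hderiv
    refine hslope.congr' ?_
    filter_upwards [self_mem_nhdsWithin] with x hx
    have hx0 : x ≠ 0 := hx
    rw [slope_def_field]
    simp [hg]
  have hεne : Tendsto ε atTop (𝓝[≠] (0:ℝ)) := by
    rw [tendsto_nhdsWithin_iff]
    refine ⟨hεtend, ?_⟩
    filter_upwards [eventually_ge_atTop 2] with n hn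
    exact (hεpos n hn).ne'
  have hεane : Tendsto (fun n => ε n * a) atTop (𝓝[≠] (0:ℝ)) := by
    rw [tendsto_nhdsWithin_iff]
    constructor
    · have := hεtend.mul_const a
      rw [zero_mul] at this
      exact this
    · filter_upwards [eventually_ge_atTop 2] with n hn
      exact (mul_pos (hεpos n hn) hapos).ne'
  have hcomp1 : Tendsto (fun n => g (ε n)) atTop (𝓝 (k:ℝ)) := hgtend.comp hεne
  have hcomp2 : Tendsto (fun n => g (ε n * a)) atTop (𝓝 (k:ℝ)) := hgtend.comp hεane
  have hkne : ((k:ℝ)) ≠ 0 := Nat.cast_ne_zero.2 hkpos.ne'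
  have hmain : Tendsto (fun n => a * (g (ε n * a) / g (ε n))) atTop (𝓝 a) := by
    have := tendsto_const_nhds (x := a) (f := atTop (α := ℕ)) |>.mul (hcomp2.div hcomp1 hkne)
    rw [div_self hkne, mul_one] at this
    exact this
  rw [ha] at hmain ⊢
  refine hmain.congr' ?_
  -- eventual equality
  have hsmall : ∀ᶠ n : ℕ in atTop, ε n * a < 1 := by
    have h6 := hεtend.mul_const a
    rw [zero_mul] at h6
    exact h6.eventually_lt_const zero_lt_one
  filter_upwards [eventually_ge_atTop 2, hsmall] with n hn hna
  have hεn := hεpos n hn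
  have hεkn := hεkey n hn
  have hnR : (0:ℝ) < (n:ℝ) := by positivity
  -- identify the measure
  have hcval : c n = (ε n)⁻¹ := by rw [hc n hn]
  have hmeq : μ {ω | ∀ i, 1 / S i ω ≤ c n * s i} = μ {ω | ∀ i, ε n / s i ≤ S i ω} := by
    refine measure_congr (Filter.eventuallyEq_set.2 ?_)
    filter_upwards [hSposAe] with ω hω
    constructor
    · intro h i
      have h1 := h i
      rw [hcval, inv_mul_eq_div, div_le_div_iff₀ (hω i) hεn] at h1
      rw [div_le_iff₀ (hs i)]
      nlinarith
    · intro h i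
      have h1 := h i
      rw [div_le_iff₀ (hs i)] at h1
      rw [hcval, inv_mul_eq_div, div_le_div_iff₀ (hω i) hεn]
      nlinarith
  have htval : (μ {ω | ∀ i, ε n / s i ≤ S i ω}).toReal = max 0 (1 - ε n * a) ^ k := by
    rw [hclosed (fun i => ε n / s i) (fun i => div_pos hεn (hs i))]
    have : ℓ (fun i => ε n / s i) = ε n * a := by
      rw [ha]
      rw [← hhomog (fun i => 1 / s i) (ε n) hεn.le]
      congr 1
      funext i
      rw [mul_one_div]
    rw [this]
  rw [hmeq, htval, max_eq_right (by linarith)]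
  -- algebra
  have hgε : g (ε n) = (1/(n:ℝ)) / ε n := by rw [hg]; simp only []; rw [hεkn]
  rw [hgε, hg]
  simp only []
  rw [← ha]
  have hane := hapos.ne'
  field_simp
end

section
/- (Asymptotic independence between a light-tailed cluster and a boundary-case cluster.) Let m_k, m_l ≥ 2. Let S_k and S_l be independent random variables with P(S_k > s) = (1 − s)^{m_k−1} and P(S_l > s) = (1 − s)^{m_l−1} for s ∈ [0,1]. Let (R_k, R_l) be a pair of positive random variables, independent of (S_k, S_l). Assume: (i) E[(1/R_k)^{1+ε}] < ∞ for some ε > 0, and (a_{nk}) are positive constants with n·P(1/S_k > a_{nk} x) → 1/x for all x > 0; set b_k = E[1/R_k]; (ii) (a_{nl}) are positive constants with n·P(1/(R_l S_l) > a_{nl} x) → 1/x for all x > 0. Then for all x, y > 0, n·P(1/(R_k S_k) > a_{nk} b_k x, 1/(R_l S_l) > a_{nl} y) → 0 as n → ∞. -/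
open MeasureTheory ProbabilityTheory Filter
open scoped Topology ENNReal
set_option maxHeartbeats 1000000

section Helpers

section Tail
variable {Ω : Type*} [MeasurableSpace Ω] (μ : Measure Ω) [IsProbabilityMeasure μ]
  {S : Ω → ℝ} {m : ℕ}

lemma S_pos (hSmeas : Measurable S) (hm : 2 ≤ m)
    (hS : ∀ s : ℝ, 0 ≤ s → s ≤ 1 → (μ {ω | s < S ω}).toReal = (1 - s) ^ (m - 1)) :
    ∀ᵐ ω ∂μ, 0 < S ω := by
  have h0 := hS 0 le_rfl zero_le_one
  simp only [sub_zero, one_pow] at h0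
  have hset : MeasurableSet {ω | (0:ℝ) < S ω} := hSmeas measurableSet_Ioi
  have h1 : μ {ω | (0:ℝ) < S ω} = 1 := by
    have := measure_ne_top μ {ω | (0:ℝ) < S ω}
    rw [← ENNReal.ofReal_toReal this, h0]; simp
  have := prob_compl_eq_one_sub (μ := μ) hset
  rw [h1] at this
  simp only [tsub_self] at this
  filter_upwards [measure_eq_zero_iff_ae_notMem.mp this] with ω h
  simpa using h

lemma pow_tail_ub (hm : 2 ≤ m) {u : ℝ} (hu0 : 0 ≤ u) (hu1 : u ≤ 1) :
    1 - (1 - u) ^ (m - 1) ≤ ((m : ℝ) - 1) * u := by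
  have h := one_add_mul_le_pow (a := -u) (by linarith) (m - 1)
  have hc : ((m - 1 : ℕ) : ℝ) = (m : ℝ) - 1 := by
    rw [Nat.cast_sub (by omega)]; simp
  rw [hc] at h
  have he : (1 + -u) = 1 - u := by ring
  rw [he] at h
  nlinarith [h]

lemma S_lt_toReal (hSmeas : Measurable S) (hm : 2 ≤ m)
    (hS : ∀ s : ℝ, 0 ≤ s → s ≤ 1 → (μ {ω | s < S ω}).toReal = (1 - s) ^ (m - 1))
    {u : ℝ} (hu0 : 0 ≤ u) (hu1 : u ≤ 1) :
    (μ {ω | S ω < u}).toReal ≤ 1 - (1 - u) ^ (m - 1) := by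
  have hset : MeasurableSet {ω | u < S ω} := hSmeas measurableSet_Ioi
  have hsub : {ω | S ω < u} ⊆ {ω | u < S ω}ᶜ := by
    intro ω h; simp only [Set.mem_compl_iff, Set.mem_setOf_eq] at *; linarith
  have h1 : μ {ω | S ω < u} ≤ μ ({ω | u < S ω}ᶜ) := measure_mono hsub
  have h2 : μ ({ω | u < S ω}ᶜ) = 1 - μ {ω | u < S ω} := prob_compl_eq_one_sub hset
  have h3 : (μ ({ω | u < S ω}ᶜ)).toReal = 1 - (1 - u) ^ (m - 1) := by
    rw [h2, ENNReal.toReal_sub_of_le prob_le_one ENNReal.one_ne_top, hS u hu0 hu1]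
    simp
  calc (μ {ω | S ω < u}).toReal ≤ (μ ({ω | u < S ω}ᶜ)).toReal :=
        ENNReal.toReal_mono (measure_ne_top _ _) h1
    _ = 1 - (1 - u) ^ (m - 1) := h3

lemma S_le_toReal (hSmeas : Measurable S) (hm : 2 ≤ m)
    (hS : ∀ s : ℝ, 0 ≤ s → s ≤ 1 → (μ {ω | s < S ω}).toReal = (1 - s) ^ (m - 1))
    {u : ℝ} (hu0 : 0 ≤ u) (hu1 : u ≤ 1) :
    1 - (1 - u) ^ (m - 1) ≤ (μ {ω | S ω ≤ u}).toReal := by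
  have hset : MeasurableSet {ω | u < S ω} := hSmeas measurableSet_Ioi
  have hcompl : {ω | S ω ≤ u} = {ω | u < S ω}ᶜ := by
    ext ω; simp [not_lt]
  rw [hcompl, prob_compl_eq_one_sub hset,
    ENNReal.toReal_sub_of_le prob_le_one ENNReal.one_ne_top, hS u hu0 hu1]
  simp

lemma tail_ub (hSmeas : Measurable S) (hm : 2 ≤ m)
    (hS : ∀ s : ℝ, 0 ≤ s → s ≤ 1 → (μ {ω | s < S ω}).toReal = (1 - s) ^ (m - 1))
    {a : ℝ} (ha : 0 < a) :
    μ {ω | a < 1 / S ω} ≤ ENNReal.ofReal (((m : ℝ) - 1) * min 1 (1 / a)) := by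
  have hm1 : (1:ℝ) ≤ (m : ℝ) - 1 := by
    have : (2:ℝ) ≤ (m:ℝ) := by exact_mod_cast hm
    linarith
  rw [ENNReal.le_ofReal_iff_toReal_le (measure_ne_top _ _)
    (by positivity : (0:ℝ) ≤ ((m : ℝ) - 1) * min 1 (1 / a))]
  rcases lt_or_ge a 1 with ha1 | ha1
  · have hmin : min 1 (1 / a) = 1 := min_eq_left (by rw [le_div_iff₀ ha]; linarith)
    rw [hmin, mul_one]
    calc (μ _).toReal ≤ (μ Set.univ).toReal :=
          ENNReal.toReal_mono (measure_ne_top _ _) (measure_mono (Set.subset_univ _))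
      _ = 1 := by simp
      _ ≤ _ := hm1
  · -- a ≥ 1
    have hu0 : 0 < 1 / a := by positivity
    have hu1 : 1 / a ≤ 1 := by rw [div_le_one ha]; linarith
    have hmin : min 1 (1 / a) = 1 / a := min_eq_right hu1
    have hsub : {ω | a < 1 / S ω} ⊆ {ω | S ω < 1 / a} := by
      intro ω h
      simp only [Set.mem_setOf_eq] at *
      rcases le_or_gt (S ω) 0 with hs | hs
      · exfalso
        have : 1 / S ω ≤ 0 := one_div_nonpos.mpr hs
        linarith
      · have h1 : a * S ω < 1 := (lt_div_iff₀ hs).mp h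
        rw [lt_div_iff₀ ha]
        nlinarith [h1]
    calc (μ {ω | a < 1 / S ω}).toReal ≤ (μ {ω | S ω < 1 / a}).toReal :=
          ENNReal.toReal_mono (measure_ne_top _ _) (measure_mono hsub)
      _ ≤ 1 - (1 - 1/a) ^ (m - 1) := S_lt_toReal μ hSmeas hm hS hu0.le hu1
      _ ≤ ((m : ℝ) - 1) * (1/a) := pow_tail_ub hm hu0.le hu1
      _ = ((m : ℝ) - 1) * min 1 (1/a) := by rw [hmin]

lemma tail_lb (hSmeas : Measurable S) (hm : 2 ≤ m)
    (hS : ∀ s : ℝ, 0 ≤ s → s ≤ 1 → (μ {ω | s < S ω}).toReal = (1 - s) ^ (m - 1))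
    {a : ℝ} (ha : 0 < a) :
    ENNReal.ofReal ((1/2) * min 1 (1 / a)) ≤ μ {ω | a < 1 / S ω} := by
  set u := min 1 (1 / (2 * a)) with hu
  have hu0 : 0 < u := lt_min one_pos (by positivity)
  have hu1 : u ≤ 1 := min_le_left _ _
  have hSpos := S_pos μ hSmeas hm hS
  -- {S ≤ u} ∩ {0 < S} ⊆ {a < 1/S}
  have hsub : {ω | S ω ≤ u} ∩ {ω | 0 < S ω} ⊆ {ω | a < 1 / S ω} := by
    rintro ω ⟨h1, h2⟩
    simp only [Set.mem_setOf_eq] at *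
    have hle : S ω ≤ 1 / (2 * a) := le_trans h1 (min_le_right _ _)
    have h2a : 2 * a ≤ 1 / S ω := by
      rw [le_div_iff₀ h2]
      rw [le_div_iff₀ (by positivity : (0:ℝ) < 2 * a)] at hle
      linarith [hle]
    linarith
  have hnull : μ ({ω | 0 < S ω}ᶜ) = 0 := by
    have := ae_iff.mp hSpos
    simpa [Set.compl_setOf] using this
  have hkey : μ {ω | S ω ≤ u} ≤ μ {ω | a < 1 / S ω} := by
    calc μ {ω | S ω ≤ u}
        ≤ μ (({ω | S ω ≤ u} ∩ {ω | 0 < S ω}) ∪ {ω | 0 < S ω}ᶜ) := by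
          apply measure_mono; intro ω h
          by_cases hω : 0 < S ω
          · exact Or.inl ⟨h, hω⟩
          · exact Or.inr hω
      _ ≤ μ ({ω | S ω ≤ u} ∩ {ω | 0 < S ω}) + μ ({ω | 0 < S ω}ᶜ) := measure_union_le _ _
      _ = μ ({ω | S ω ≤ u} ∩ {ω | 0 < S ω}) := by rw [hnull, add_zero]
      _ ≤ μ {ω | a < 1 / S ω} := measure_mono hsub
  have hlow : u ≤ (μ {ω | S ω ≤ u}).toReal := by
    have h1 := S_le_toReal μ hSmeas hm hS hu0.le hu1
    have h2 : (1 - u) ^ (m - 1) ≤ 1 - u := by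
      apply pow_le_of_le_one (by linarith) (by linarith) (by omega)
    linarith
  have hmin2 : (1/2) * min 1 (1 / a) ≤ u := by
    have : (1/2 : ℝ) * min 1 (1 / a) = min (1/2) (1/(2*a)) := by
      rw [mul_min_of_nonneg _ _ (by norm_num : (0:ℝ) ≤ 1/2)]
      congr 1
      · norm_num
      · field_simp
    rw [this, hu]
    exact min_le_min (by norm_num) le_rfl
  calc ENNReal.ofReal ((1/2) * min 1 (1 / a)) ≤ ENNReal.ofReal u :=
        ENNReal.ofReal_le_ofReal hmin2
    _ ≤ μ {ω | S ω ≤ u} := by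
        rw [ENNReal.ofReal_le_iff_le_toReal (measure_ne_top _ _)]; exact hlow
    _ ≤ _ := hkey

end Tail


/-- Conditioning on the first coordinate for independent random elements. -/
lemma cond_lemma {Ω α β : Type*} [MeasurableSpace Ω] [MeasurableSpace α] [MeasurableSpace β]
    (μ : Measure Ω) [IsProbabilityMeasure μ]
    {T : Ω → α} {U : Ω → β} (hT : Measurable T) (hU : Measurable U)
    (h : IndepFun T U μ) {E : Set (α × β)} (hE : MeasurableSet E) :
    μ {ω | (T ω, U ω) ∈ E} = ∫⁻ t, μ {ω | (t, U ω) ∈ E} ∂(μ.map T) := by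
  haveI : IsProbabilityMeasure (μ.map U) := Measure.isProbabilityMeasure_map hU.aemeasurable
  have h1 : μ.map (fun ω => (T ω, U ω)) = (μ.map T).prod (μ.map U) :=
    (indepFun_iff_map_prod_eq_prod_map_map hT.aemeasurable hU.aemeasurable).mp h
  have h2 : μ {ω | (T ω, U ω) ∈ E} = μ.map (fun ω => (T ω, U ω)) E := by
    rw [Measure.map_apply (hT.prodMk hU) hE]; rfl
  rw [h2, h1, Measure.prod_apply hE]
  refine lintegral_congr fun t => ?_
  rw [Measure.map_apply hU (measurable_prodMk_left hE)]
  rfl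


lemma aux_iff {r s cc : ℝ} (hr : 0 < r) (hs : 0 < s) :
    cc < 1 / (r * s) ↔ cc * r < 1 / s := by
  rw [lt_div_iff₀ (mul_pos hr hs), lt_div_iff₀ hs]
  constructor <;> intro h <;> nlinarith [h]

section Main
variable {Ω : Type*} [MeasurableSpace Ω] (μ : Measure Ω) [IsProbabilityMeasure μ]

/-- Lower bound for the boundary cluster probability. -/
lemma lb_lintegral {Rl Sl : Ω → ℝ} {ml : ℕ} (hml : 2 ≤ ml)
    (hRlmeas : Measurable Rl) (hSlmeas : Measurable Sl)
    (hind : IndepFun Rl Sl μ)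
    (hRlpos : ∀ᵐ ω ∂μ, 0 < Rl ω)
    (hSl : ∀ s : ℝ, 0 ≤ s → s ≤ 1 → (μ {ω | s < Sl ω}).toReal = (1 - s) ^ (ml - 1))
    {d : ℝ} (hd : 0 < d) :
    ∫⁻ ω, ENNReal.ofReal (min 1 (1 / (d * Rl ω))) ∂μ
      ≤ 2 * μ {ω | d < 1 / (Rl ω * Sl ω)} := by
  have hSlpos : ∀ᵐ ω ∂μ, 0 < Sl ω := S_pos μ hSlmeas hml hSl
  set E : Set (ℝ × ℝ) := {p | d * p.1 < 1 / p.2} with hEdef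
  have hE : MeasurableSet E :=
    measurableSet_lt (measurable_fst.const_mul d) (measurable_const.div measurable_snd)
  have hseteq : μ {ω | d < 1 / (Rl ω * Sl ω)} = μ {ω | (Rl ω, Sl ω) ∈ E} := by
    apply measure_congr
    rw [Filter.eventuallyEq_set]
    filter_upwards [hRlpos, hSlpos] with ω h1 h2
    simpa [hEdef] using aux_iff h1 h2
  have hcond : μ {ω | (Rl ω, Sl ω) ∈ E}
      = ∫⁻ r, μ {ω | d * r < 1 / Sl ω} ∂(μ.map Rl) := by
    rw [cond_lemma μ hRlmeas hSlmeas hind hE]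
    exact lintegral_congr fun t => rfl
  have hmappos : ∀ᵐ r ∂(μ.map Rl), 0 < r :=
    (MeasureTheory.ae_map_iff hRlmeas.aemeasurable measurableSet_Ioi).mpr hRlpos
  have hlb : ∫⁻ r, ENNReal.ofReal ((1/2) * min 1 (1 / (d * r))) ∂(μ.map Rl)
      ≤ ∫⁻ r, μ {ω | d * r < 1 / Sl ω} ∂(μ.map Rl) := by
    apply lintegral_mono_ae
    filter_upwards [hmappos] with r hr
    exact tail_lb μ hSlmeas hml hSl (mul_pos hd hr)
  have hmap : ∫⁻ r, ENNReal.ofReal ((1/2) * min 1 (1 / (d * r))) ∂(μ.map Rl)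
      = ∫⁻ ω, ENNReal.ofReal ((1/2) * min 1 (1 / (d * Rl ω))) ∂μ := by
    have hfm : Measurable fun r : ℝ => (1:ℝ)/2 * min 1 (1 / (d * r)) := by fun_prop
    exact lintegral_map hfm.ennreal_ofReal hRlmeas
  have hmin : Measurable fun ω => min 1 (1 / (d * Rl ω)) := by fun_prop
  have key : ENNReal.ofReal (1/2) * ∫⁻ ω, ENNReal.ofReal (min 1 (1 / (d * Rl ω))) ∂μ
      ≤ μ {ω | d < 1 / (Rl ω * Sl ω)} := by
    calc ENNReal.ofReal (1/2) * ∫⁻ ω, ENNReal.ofReal (min 1 (1 / (d * Rl ω))) ∂μ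
        = ∫⁻ ω, ENNReal.ofReal ((1/2) * min 1 (1 / (d * Rl ω))) ∂μ := by
          rw [← lintegral_const_mul _ hmin.ennreal_ofReal]
          exact lintegral_congr fun ω => (ENNReal.ofReal_mul (by norm_num)).symm
      _ = ∫⁻ r, ENNReal.ofReal ((1/2) * min 1 (1 / (d * r))) ∂(μ.map Rl) := hmap.symm
      _ ≤ ∫⁻ r, μ {ω | d * r < 1 / Sl ω} ∂(μ.map Rl) := hlb
      _ = μ {ω | d < 1 / (Rl ω * Sl ω)} := by rw [hseteq, hcond]
  have h2 : ENNReal.ofReal (1/2) = (2:ℝ≥0∞)⁻¹ := by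
    rw [ENNReal.ofReal_div_of_pos two_pos]; simp
  rw [h2] at key
  have := mul_le_mul_right key (2:ℝ≥0∞)
  rwa [← mul_assoc, ENNReal.mul_inv_cancel (by norm_num) (by norm_num), one_mul] at this

/-- Upper bound for the joint probability. -/
lemma ub_joint {Rk Rl Sk Sl : Ω → ℝ} {mk ml : ℕ} (hmk : 2 ≤ mk) (hml : 2 ≤ ml)
    (hRkmeas : Measurable Rk) (hRlmeas : Measurable Rl)
    (hSkmeas : Measurable Sk) (hSlmeas : Measurable Sl)
    (hRSindep : IndepFun (fun ω => (Rk ω, Rl ω)) (fun ω => (Sk ω, Sl ω)) μ)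
    (hSindep : IndepFun Sk Sl μ)
    (hRkpos : ∀ᵐ ω ∂μ, 0 < Rk ω) (hRlpos : ∀ᵐ ω ∂μ, 0 < Rl ω)
    (hSk : ∀ s : ℝ, 0 ≤ s → s ≤ 1 → (μ {ω | s < Sk ω}).toReal = (1 - s) ^ (mk - 1))
    (hSl : ∀ s : ℝ, 0 ≤ s → s ≤ 1 → (μ {ω | s < Sl ω}).toReal = (1 - s) ^ (ml - 1))
    {c d : ℝ} (hc : 0 < c) (hd : 0 < d) :
    μ {ω | c < 1 / (Rk ω * Sk ω) ∧ d < 1 / (Rl ω * Sl ω)}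
      ≤ ENNReal.ofReal ((mk : ℝ) - 1) * ENNReal.ofReal ((ml : ℝ) - 1) *
        ∫⁻ ω, ENNReal.ofReal (min 1 (1 / (c * Rk ω))) *
          ENNReal.ofReal (min 1 (1 / (d * Rl ω))) ∂μ := by
  have hSkpos : ∀ᵐ ω ∂μ, 0 < Sk ω := S_pos μ hSkmeas hmk hSk
  have hSlpos : ∀ᵐ ω ∂μ, 0 < Sl ω := S_pos μ hSlmeas hml hSl
  set E : Set ((ℝ × ℝ) × (ℝ × ℝ)) :=
    {p | c * p.1.1 < 1 / p.2.1 ∧ d * p.1.2 < 1 / p.2.2} with hEdef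
  have hE : MeasurableSet E := by
    apply MeasurableSet.inter
    · exact measurableSet_lt (measurable_fst.fst.const_mul c)
        (measurable_const.div measurable_snd.fst)
    · exact measurableSet_lt (measurable_fst.snd.const_mul d)
        (measurable_const.div measurable_snd.snd)
  have hsetgeq : μ {ω | c < 1 / (Rk ω * Sk ω) ∧ d < 1 / (Rl ω * Sl ω)}
      = μ {ω | ((Rk ω, Rl ω), (Sk ω, Sl ω)) ∈ E} := by
    apply measure_congr
    rw [Filter.eventuallyEq_set]
    filter_upwards [hRkpos, hRlpos, hSkpos, hSlpos] with ω h1 h2 h3 h4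
    simp only [Set.mem_setOf_eq, hEdef]
    rw [aux_iff h1 h3, aux_iff h2 h4]
  have hcond : μ {ω | ((Rk ω, Rl ω), (Sk ω, Sl ω)) ∈ E}
      = ∫⁻ r, μ {ω | c * r.1 < 1 / Sk ω ∧ d * r.2 < 1 / Sl ω} ∂(μ.map (fun ω => (Rk ω, Rl ω))) := by
    rw [cond_lemma μ (hRkmeas.prodMk hRlmeas) (hSkmeas.prodMk hSlmeas) hRSindep hE]
    exact lintegral_congr fun t => rfl
  have hmappos : ∀ᵐ r ∂(μ.map (fun ω => (Rk ω, Rl ω))), 0 < r.1 ∧ 0 < r.2 := by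
    refine (MeasureTheory.ae_map_iff (hRkmeas.prodMk hRlmeas).aemeasurable ?_).mpr ?_
    · exact (measurableSet_lt measurable_const measurable_fst).inter
        (measurableSet_lt measurable_const measurable_snd)
    · filter_upwards [hRkpos, hRlpos] with ω h1 h2 using ⟨h1, h2⟩
  have hub : ∫⁻ r, μ {ω | c * r.1 < 1 / Sk ω ∧ d * r.2 < 1 / Sl ω}
        ∂(μ.map (fun ω => (Rk ω, Rl ω)))
      ≤ ∫⁻ r, ENNReal.ofReal (((mk : ℝ) - 1) * min 1 (1 / (c * r.1))) *
          ENNReal.ofReal (((ml : ℝ) - 1) * min 1 (1 / (d * r.2)))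
        ∂(μ.map (fun ω => (Rk ω, Rl ω))) := by
    apply lintegral_mono_ae
    filter_upwards [hmappos] with r hr
    have hsplit : {ω | c * r.1 < 1 / Sk ω ∧ d * r.2 < 1 / Sl ω}
        = Sk ⁻¹' {s | c * r.1 < 1 / s} ∩ Sl ⁻¹' {s | d * r.2 < 1 / s} := rfl
    have hs1 : MeasurableSet {s : ℝ | c * r.1 < 1 / s} :=
      measurableSet_lt measurable_const (by fun_prop)
    have hs2 : MeasurableSet {s : ℝ | d * r.2 < 1 / s} :=
      measurableSet_lt measurable_const (by fun_prop)
    rw [hsplit, hSindep.measure_inter_preimage_eq_mul _ _ hs1 hs2]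
    exact mul_le_mul' (tail_ub μ hSkmeas hmk hSk (mul_pos hc hr.1))
      (tail_ub μ hSlmeas hml hSl (mul_pos hd hr.2))
  have hmap : ∫⁻ r, ENNReal.ofReal (((mk : ℝ) - 1) * min 1 (1 / (c * r.1))) *
          ENNReal.ofReal (((ml : ℝ) - 1) * min 1 (1 / (d * r.2)))
        ∂(μ.map (fun ω => (Rk ω, Rl ω)))
      = ∫⁻ ω, ENNReal.ofReal (((mk : ℝ) - 1) * min 1 (1 / (c * Rk ω))) *
          ENNReal.ofReal (((ml : ℝ) - 1) * min 1 (1 / (d * Rl ω))) ∂μ := by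
    have hf1 : Measurable fun r : ℝ × ℝ => ((mk : ℝ) - 1) * min 1 (1 / (c * r.1)) := by fun_prop
    have hf2 : Measurable fun r : ℝ × ℝ => ((ml : ℝ) - 1) * min 1 (1 / (d * r.2)) := by fun_prop
    exact lintegral_map (hf1.ennreal_ofReal.mul hf2.ennreal_ofReal) (hRkmeas.prodMk hRlmeas)
  have hmk1 : (0:ℝ) ≤ (mk : ℝ) - 1 := by
    have : (2:ℝ) ≤ (mk:ℝ) := by exact_mod_cast hmk
    linarith
  have hml1 : (0:ℝ) ≤ (ml : ℝ) - 1 := by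
    have : (2:ℝ) ≤ (ml:ℝ) := by exact_mod_cast hml
    linarith
  calc μ {ω | c < 1 / (Rk ω * Sk ω) ∧ d < 1 / (Rl ω * Sl ω)}
      = μ {ω | ((Rk ω, Rl ω), (Sk ω, Sl ω)) ∈ E} := hsetgeq
    _ = ∫⁻ r, μ {ω | c * r.1 < 1 / Sk ω ∧ d * r.2 < 1 / Sl ω}
        ∂(μ.map (fun ω => (Rk ω, Rl ω))) := hcond
    _ ≤ _ := hub
    _ = ∫⁻ ω, ENNReal.ofReal (((mk : ℝ) - 1) * min 1 (1 / (c * Rk ω))) *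
          ENNReal.ofReal (((ml : ℝ) - 1) * min 1 (1 / (d * Rl ω))) ∂μ := hmap
    _ = ENNReal.ofReal ((mk : ℝ) - 1) * ENNReal.ofReal ((ml : ℝ) - 1) *
        ∫⁻ ω, ENNReal.ofReal (min 1 (1 / (c * Rk ω))) *
          ENNReal.ofReal (min 1 (1 / (d * Rl ω))) ∂μ := by
        have hA : Measurable fun ω => min 1 (1 / (c * Rk ω)) := by fun_prop
        have hB : Measurable fun ω => min 1 (1 / (d * Rl ω)) := by fun_prop
        calc ∫⁻ ω, ENNReal.ofReal (((mk : ℝ) - 1) * min 1 (1 / (c * Rk ω))) *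
              ENNReal.ofReal (((ml : ℝ) - 1) * min 1 (1 / (d * Rl ω))) ∂μ
            = ∫⁻ ω, (ENNReal.ofReal ((mk : ℝ) - 1) * ENNReal.ofReal ((ml : ℝ) - 1)) *
              (ENNReal.ofReal (min 1 (1 / (c * Rk ω))) *
                ENNReal.ofReal (min 1 (1 / (d * Rl ω)))) ∂μ := by
              refine lintegral_congr fun ω => ?_
              rw [ENNReal.ofReal_mul hmk1, ENNReal.ofReal_mul hml1]
              ring
          _ = (ENNReal.ofReal ((mk : ℝ) - 1) * ENNReal.ofReal ((ml : ℝ) - 1)) *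
              ∫⁻ ω, ENNReal.ofReal (min 1 (1 / (c * Rk ω))) *
                ENNReal.ofReal (min 1 (1 / (d * Rl ω))) ∂μ :=
              lintegral_const_mul _ (hA.ennreal_ofReal.mul hB.ennreal_ofReal)
          _ = _ := by ring

end Main

end Helpers
/-- (Asymptotic independence between a light-tailed cluster and a
boundary-case cluster.) -/
theorem stmt_8
    {Ω : Type*} [MeasurableSpace Ω] (μ : Measure Ω) [IsProbabilityMeasure μ]
    (mk ml : ℕ) (hmk : 2 ≤ mk) (hml : 2 ≤ ml)
    (Sk Sl : Ω → ℝ) (hSkmeas : Measurable Sk) (hSlmeas : Measurable Sl)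
    (hSk : ∀ s : ℝ, 0 ≤ s → s ≤ 1 → (μ {ω | s < Sk ω}).toReal = (1 - s) ^ (mk - 1))
    (hSl : ∀ s : ℝ, 0 ≤ s → s ≤ 1 → (μ {ω | s < Sl ω}).toReal = (1 - s) ^ (ml - 1))
    (hSindep : IndepFun Sk Sl μ)
    (Rk Rl : Ω → ℝ) (hRkmeas : Measurable Rk) (hRlmeas : Measurable Rl)
    (hRkpos : ∀ᵐ ω ∂μ, 0 < Rk ω) (hRlpos : ∀ᵐ ω ∂μ, 0 < Rl ω)
    (hRSindep : IndepFun (fun ω => (Rk ω, Rl ω)) (fun ω => (Sk ω, Sl ω)) μ)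
    -- (i) light-tailed cluster k
    (ε : ℝ) (hε : 0 < ε)
    (hmom : Integrable (fun ω => (1 / Rk ω) ^ (1 + ε)) μ)
    (ank : ℕ → ℝ) (hank : ∀ n, 0 < ank n)
    (haSk : ∀ x : ℝ, 0 < x →
      Tendsto (fun n : ℕ => (n : ℝ) * (μ {ω | ank n * x < 1 / Sk ω}).toReal)
        atTop (𝓝 (1 / x)))
    (bk : ℝ) (hbk : bk = ∫ ω, 1 / Rk ω ∂μ)
    -- (ii) boundary-case cluster l
    (anl : ℕ → ℝ) (hanl : ∀ n, 0 < anl n)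
    (haRSl : ∀ x : ℝ, 0 < x →
      Tendsto
        (fun n : ℕ => (n : ℝ) * (μ {ω | anl n * x < 1 / (Rl ω * Sl ω)}).toReal)
        atTop (𝓝 (1 / x))) :
    ∀ x y : ℝ, 0 < x → 0 < y →
      Tendsto
        (fun n : ℕ =>
          (n : ℝ) * (μ {ω | ank n * bk * x < 1 / (Rk ω * Sk ω) ∧
            anl n * y < 1 / (Rl ω * Sl ω)}).toReal)
        atTop (𝓝 0) := by
  intro x y hx hy
  have hmk1' : (0:ℝ) ≤ (mk : ℝ) - 1 := by
    have : (2:ℝ) ≤ (mk:ℝ) := by exact_mod_cast hmk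
    linarith
  have hml1' : (0:ℝ) ≤ (ml : ℝ) - 1 := by
    have : (2:ℝ) ≤ (ml:ℝ) := by exact_mod_cast hml
    linarith
  have hIndRlSl : IndepFun Rl Sl μ := hRSindep.comp measurable_snd measurable_snd
  -- integrability of 1/Rk and positivity of bk
  have hIntRk : Integrable (fun ω => 1 / Rk ω) μ := by
    refine Integrable.mono' ((integrable_const (1:ℝ)).add hmom)
      ((measurable_const.div hRkmeas).aestronglyMeasurable) ?_
    filter_upwards [hRkpos] with ω hω
    have hr : 0 < 1 / Rk ω := by positivity
    rw [Real.norm_eq_abs, abs_of_pos hr]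
    show 1 / Rk ω ≤ 1 + (1 / Rk ω) ^ (1 + ε)
    rcases le_or_gt (1 / Rk ω) 1 with h1 | h1
    · have h2 : (0:ℝ) ≤ (1 / Rk ω) ^ (1 + ε) := Real.rpow_nonneg hr.le _
      linarith
    · have h2 : (1 / Rk ω) ^ (1:ℝ) ≤ (1 / Rk ω) ^ (1 + ε) :=
        Real.rpow_le_rpow_of_exponent_le h1.le (by linarith)
      rw [Real.rpow_one] at h2
      linarith
  have hbkpos : 0 < bk := by
    rw [hbk]
    have hae : 0 ≤ᵐ[μ] fun ω => 1 / Rk ω := hRkpos.mono fun ω h => by positivity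
    rw [integral_pos_iff_support_of_nonneg_ae hae hIntRk]
    have hms : MeasurableSet {ω | 0 < Rk ω} := measurableSet_lt measurable_const hRkmeas
    have h0 : μ ({ω | 0 < Rk ω}ᶜ) = 0 := by
      have := ae_iff.mp hRkpos
      simpa [Set.compl_setOf] using this
    have h1 : μ {ω | 0 < Rk ω} = 1 := by
      have h2 := measure_add_measure_compl (μ := μ) hms
      rw [h0, add_zero, measure_univ] at h2
      exact h2
    have hsub : {ω | 0 < Rk ω} ⊆ Function.support fun ω => 1 / Rk ω := by
      intro ω h
      simp only [Set.mem_setOf_eq] at h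
      simp only [Function.mem_support]
      exact ne_of_gt (by positivity)
    calc (0:ℝ≥0∞) < 1 := by norm_num
      _ = μ {ω | 0 < Rk ω} := h1.symm
      _ ≤ _ := measure_mono hsub
  -- moment bound
  set M := ∫⁻ ω, ENNReal.ofReal ((1 / Rk ω) ^ (1 + ε)) ∂μ with hMdef
  have hMfin : M ≠ ⊤ := by
    refine ne_top_of_lt (lt_of_le_of_lt (lintegral_mono fun ω => ?_) hmom.hasFiniteIntegral)
    exact Real.ofReal_le_enorm _
  -- conjugate exponents
  set q := (1 + ε) / ε with hqdef
  have hq0 : 0 < q := by positivity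
  have hq1 : 1 ≤ q := by
    rw [hqdef, le_div_iff₀ hε]
    linarith
  have hconj : Real.HolderConjugate (1 + ε) q := by
    rw [Real.holderConjugate_iff]
    constructor
    · linarith
    · have h1 : ε ≠ 0 := ne_of_gt hε
      have h2 : 1 + ε ≠ 0 := by positivity
      rw [hqdef]
      field_simp
  set CM := (M ^ (1 / (1 + ε))).toReal with hCMdef
  have hCMeq : M ^ (1 / (1 + ε)) = ENNReal.ofReal CM :=
    (ENNReal.ofReal_toReal (ENNReal.rpow_ne_top_of_nonneg (by positivity) hMfin)).symm
  have hCM0 : 0 ≤ CM := ENNReal.toReal_nonneg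
  -- Step B : eventual linear growth of ank
  have htendSk : Tendsto (fun n : ℕ => (n : ℝ) * (μ {ω | ank n < 1 / Sk ω}).toReal)
      atTop (𝓝 1) := by
    have := haSk 1 one_pos
    simpa using this
  have hank4 : ∀ᶠ n : ℕ in atTop, (n : ℝ) / 4 ≤ ank n := by
    have hev2 : ∀ᶠ n : ℕ in atTop,
        (n : ℝ) * (μ {ω | ank n < 1 / Sk ω}).toReal < 2 :=
      htendSk.eventually_lt_const (by norm_num)
    filter_upwards [hev2, eventually_ge_atTop 5] with n h2 h5
    have hnR : (5:ℝ) ≤ (n:ℝ) := by exact_mod_cast h5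
    have hP : (1/2) * min 1 (1 / ank n) ≤ (μ {ω | ank n < 1 / Sk ω}).toReal := by
      have := tail_lb μ hSkmeas hmk hSk (hank n)
      rwa [ENNReal.ofReal_le_iff_le_toReal (measure_ne_top _ _)] at this
    have hmul : (n : ℝ) * ((1/2) * min 1 (1 / ank n)) < 2 :=
      lt_of_le_of_lt (mul_le_mul_of_nonneg_left hP (by positivity)) h2
    rcases min_cases 1 (1 / ank n) with ⟨hmeq, _⟩ | ⟨hmeq, _⟩
    · rw [hmeq] at hmul
      exfalso; nlinarith
    · rw [hmeq] at hmul
      have ha := hank n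
      have e : (n:ℝ) * ((1/2) * (1 / ank n)) = ((n:ℝ) * (ank n)⁻¹) / 2 := by ring
      rw [e] at hmul
      have h4 : (n : ℝ) * (ank n)⁻¹ < 4 := by linarith
      have h5' := mul_lt_mul_of_pos_right h4 ha
      rw [mul_assoc, inv_mul_cancel₀ (ne_of_gt ha), mul_one] at h5'
      linarith
  -- Step C : eventual bound on the ψl integral
  have hBev : ∀ᶠ n : ℕ in atTop,
      (n : ℝ) * (μ {ω | anl n * y < 1 / (Rl ω * Sl ω)}).toReal < 2 / y := by
    refine (haRSl y hy).eventually_lt_const ?_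
    rw [div_lt_div_iff₀ hy hy]
    nlinarith
  have hC : ∀ᶠ n : ℕ in atTop,
      ∫⁻ ω, ENNReal.ofReal (min 1 (1 / (anl n * y * Rl ω))) ∂μ
        ≤ ENNReal.ofReal ((4 / y) * (n : ℝ)⁻¹) := by
    filter_upwards [hBev, eventually_ge_atTop 1] with n hn h1
    have hnpos : (0:ℝ) < (n:ℝ) := by exact_mod_cast h1
    have hmB : (μ {ω | anl n * y < 1 / (Rl ω * Sl ω)}).toReal ≤ (2 / y) * (n:ℝ)⁻¹ := by
      have h' := le_of_lt hn
      calc (μ {ω | anl n * y < 1 / (Rl ω * Sl ω)}).toReal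
          = (n:ℝ)⁻¹ * ((n:ℝ) * (μ {ω | anl n * y < 1 / (Rl ω * Sl ω)}).toReal) := by
            field_simp
        _ ≤ (n:ℝ)⁻¹ * (2 / y) := mul_le_mul_of_nonneg_left h' (by positivity)
        _ = (2 / y) * (n:ℝ)⁻¹ := by ring
    have hmB' : μ {ω | anl n * y < 1 / (Rl ω * Sl ω)}
        ≤ ENNReal.ofReal ((2 / y) * (n:ℝ)⁻¹) := by
      rw [ENNReal.le_ofReal_iff_toReal_le (measure_ne_top _ _) (by positivity)]
      exact hmB
    calc ∫⁻ ω, ENNReal.ofReal (min 1 (1 / (anl n * y * Rl ω))) ∂μ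
        ≤ 2 * μ {ω | anl n * y < 1 / (Rl ω * Sl ω)} :=
          lb_lintegral μ hml hRlmeas hSlmeas hIndRlSl hRlpos hSl
            (mul_pos (hanl n) hy)
      _ ≤ 2 * ENNReal.ofReal ((2 / y) * (n:ℝ)⁻¹) := mul_le_mul_right hmB' 2
      _ = ENNReal.ofReal ((4 / y) * (n:ℝ)⁻¹) := by
          rw [show (2:ℝ≥0∞) = ENNReal.ofReal 2 by simp,
            ← ENNReal.ofReal_mul (by norm_num)]
          congr 1
          ring
  -- main eventual bound
  set Cst := (((mk:ℝ) - 1) * ((ml:ℝ) - 1)) * CM * ((4 / y) ^ (1/q)) * (4 / (bk * x))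
    with hCstdef
  have main : ∀ᶠ n : ℕ in atTop,
      (n : ℝ) * (μ {ω | ank n * bk * x < 1 / (Rk ω * Sk ω) ∧
        anl n * y < 1 / (Rl ω * Sl ω)}).toReal ≤ Cst * (n:ℝ) ^ (-(1/q)) := by
    filter_upwards [hank4, hC, eventually_ge_atTop 1] with n h4 hCn h1
    have hnpos : (0:ℝ) < (n:ℝ) := by exact_mod_cast h1
    have hcpos : (0:ℝ) < ank n * bk * x := by
      have := hank n; positivity
    have hdpos : (0:ℝ) < anl n * y := by
      have := hanl n; positivity
    -- measurability of the two ψ functions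
    have hψkm : Measurable fun ω => ENNReal.ofReal (min 1 (1 / (ank n * bk * x * Rk ω))) := by
      have : Measurable fun ω => min 1 (1 / (ank n * bk * x * Rk ω)) := by fun_prop
      exact this.ennreal_ofReal
    have hψlm : Measurable fun ω => ENNReal.ofReal (min 1 (1 / (anl n * y * Rl ω))) := by
      have : Measurable fun ω => min 1 (1 / (anl n * y * Rl ω)) := by fun_prop
      exact this.ennreal_ofReal
    -- step 1 : upper bound by a product integral
    have hstep1 := ub_joint μ hmk hml hRkmeas hRlmeas hSkmeas hSlmeas hRSindep hSindep
      hRkpos hRlpos hSk hSl hcpos hdpos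
    -- step 2 : Hölder
    have hstep2 : ∫⁻ ω, ENNReal.ofReal (min 1 (1 / (ank n * bk * x * Rk ω))) *
          ENNReal.ofReal (min 1 (1 / (anl n * y * Rl ω))) ∂μ
        ≤ (∫⁻ ω, ENNReal.ofReal (min 1 (1 / (ank n * bk * x * Rk ω))) ^ (1+ε) ∂μ) ^ (1/(1+ε)) *
          (∫⁻ ω, ENNReal.ofReal (min 1 (1 / (anl n * y * Rl ω))) ^ q ∂μ) ^ (1/q) := by
      have := ENNReal.lintegral_mul_le_Lp_mul_Lq μ hconj hψkm.aemeasurable hψlm.aemeasurable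
      simpa only [Pi.mul_apply] using this
    -- step 3 : Lp factor
    have hstep3 : (∫⁻ ω, ENNReal.ofReal (min 1 (1 / (ank n * bk * x * Rk ω))) ^ (1+ε) ∂μ) ^ (1/(1+ε))
        ≤ ENNReal.ofReal (1 / (ank n * bk * x)) * ENNReal.ofReal CM := by
      rw [← hCMeq]
      have hp0 : (0:ℝ) < 1 + ε := by linarith
      have hpt : ∀ ω, (ENNReal.ofReal (min 1 (1 / (ank n * bk * x * Rk ω)))) ^ (1+ε)
          ≤ (ENNReal.ofReal (1 / (ank n * bk * x)) * ENNReal.ofReal (1 / Rk ω)) ^ (1+ε) := by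
        intro ω
        apply ENNReal.rpow_le_rpow _ hp0.le
        calc ENNReal.ofReal (min 1 (1 / (ank n * bk * x * Rk ω)))
            ≤ ENNReal.ofReal (1 / (ank n * bk * x * Rk ω)) :=
              ENNReal.ofReal_le_ofReal (min_le_right _ _)
          _ = ENNReal.ofReal ((1 / (ank n * bk * x)) * (1 / Rk ω)) := by
              rw [one_div_mul_one_div]
          _ = ENNReal.ofReal (1 / (ank n * bk * x)) * ENNReal.ofReal (1 / Rk ω) :=
              ENNReal.ofReal_mul (by positivity)
      have hstep : (∫⁻ ω, ENNReal.ofReal (min 1 (1 / (ank n * bk * x * Rk ω))) ^ (1+ε) ∂μ)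
          ≤ ENNReal.ofReal (1 / (ank n * bk * x)) ^ (1+ε) * M := by
        calc (∫⁻ ω, ENNReal.ofReal (min 1 (1 / (ank n * bk * x * Rk ω))) ^ (1+ε) ∂μ)
            ≤ ∫⁻ ω, (ENNReal.ofReal (1 / (ank n * bk * x)) * ENNReal.ofReal (1 / Rk ω)) ^ (1+ε) ∂μ :=
              lintegral_mono hpt
          _ = ∫⁻ ω, ENNReal.ofReal (1 / (ank n * bk * x)) ^ (1+ε) *
                ENNReal.ofReal (1 / Rk ω) ^ (1+ε) ∂μ := by
              refine lintegral_congr fun ω => ?_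
              rw [ENNReal.mul_rpow_of_nonneg _ _ hp0.le]
          _ = ENNReal.ofReal (1 / (ank n * bk * x)) ^ (1+ε) *
                ∫⁻ ω, ENNReal.ofReal (1 / Rk ω) ^ (1+ε) ∂μ := by
              apply lintegral_const_mul
              have hm1 : Measurable fun ω => ENNReal.ofReal (1 / Rk ω) :=
                (measurable_const.div hRkmeas).ennreal_ofReal
              fun_prop
          _ = ENNReal.ofReal (1 / (ank n * bk * x)) ^ (1+ε) * M := by
              rw [hMdef]
              congr 1
              apply lintegral_congr_ae
              filter_upwards [hRkpos] with ω hω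
              rw [ENNReal.ofReal_rpow_of_nonneg (by positivity) hp0.le]
      calc (∫⁻ ω, ENNReal.ofReal (min 1 (1 / (ank n * bk * x * Rk ω))) ^ (1+ε) ∂μ) ^ (1/(1+ε))
          ≤ (ENNReal.ofReal (1 / (ank n * bk * x)) ^ (1+ε) * M) ^ (1/(1+ε)) :=
            ENNReal.rpow_le_rpow hstep (by positivity)
        _ = ENNReal.ofReal (1 / (ank n * bk * x)) * M ^ (1/(1+ε)) := by
            rw [ENNReal.mul_rpow_of_nonneg _ _ (by positivity : (0:ℝ) ≤ 1/(1+ε)),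
              ← ENNReal.rpow_mul, mul_one_div_cancel (ne_of_gt hp0), ENNReal.rpow_one]
    -- step 4 : Lq factor
    have hstep4 : (∫⁻ ω, ENNReal.ofReal (min 1 (1 / (anl n * y * Rl ω))) ^ q ∂μ) ^ (1/q)
        ≤ ENNReal.ofReal (((4 / y) * (n:ℝ)⁻¹) ^ (1/q)) := by
      have hq : ∫⁻ ω, ENNReal.ofReal (min 1 (1 / (anl n * y * Rl ω))) ^ q ∂μ
          ≤ ∫⁻ ω, ENNReal.ofReal (min 1 (1 / (anl n * y * Rl ω))) ∂μ := by
        refine lintegral_mono fun ω => ?_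
        have hle1 : ENNReal.ofReal (min 1 (1 / (anl n * y * Rl ω))) ≤ 1 :=
          ENNReal.ofReal_le_one.mpr (min_le_left _ _)
        calc ENNReal.ofReal (min 1 (1 / (anl n * y * Rl ω))) ^ q
            ≤ ENNReal.ofReal (min 1 (1 / (anl n * y * Rl ω))) ^ (1:ℝ) :=
              ENNReal.rpow_le_rpow_of_exponent_ge hle1 hq1
          _ = _ := ENNReal.rpow_one _
      calc (∫⁻ ω, ENNReal.ofReal (min 1 (1 / (anl n * y * Rl ω))) ^ q ∂μ) ^ (1/q)
          ≤ (ENNReal.ofReal ((4 / y) * (n:ℝ)⁻¹)) ^ (1/q) :=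
            ENNReal.rpow_le_rpow (le_trans hq hCn) (by positivity)
        _ = ENNReal.ofReal (((4 / y) * (n:ℝ)⁻¹) ^ (1/q)) :=
            ENNReal.ofReal_rpow_of_nonneg (by positivity) (by positivity)
    -- combine in ℝ≥0∞
    have hcomb : μ {ω | ank n * bk * x < 1 / (Rk ω * Sk ω) ∧
          anl n * y < 1 / (Rl ω * Sl ω)}
        ≤ ENNReal.ofReal ((((mk:ℝ) - 1) * ((ml:ℝ) - 1)) *
            (((1 / (ank n * bk * x)) * CM) * (((4 / y) * (n:ℝ)⁻¹) ^ (1/q)))) := by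
      calc μ {ω | ank n * bk * x < 1 / (Rk ω * Sk ω) ∧ anl n * y < 1 / (Rl ω * Sl ω)}
          ≤ ENNReal.ofReal ((mk : ℝ) - 1) * ENNReal.ofReal ((ml : ℝ) - 1) *
            ∫⁻ ω, ENNReal.ofReal (min 1 (1 / (ank n * bk * x * Rk ω))) *
              ENNReal.ofReal (min 1 (1 / (anl n * y * Rl ω))) ∂μ := hstep1
        _ ≤ ENNReal.ofReal ((mk : ℝ) - 1) * ENNReal.ofReal ((ml : ℝ) - 1) *
            ((ENNReal.ofReal (1 / (ank n * bk * x)) * ENNReal.ofReal CM) *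
              ENNReal.ofReal (((4 / y) * (n:ℝ)⁻¹) ^ (1/q))) := by
            refine mul_le_mul_right (le_trans hstep2 ?_) _
            exact mul_le_mul' hstep3 hstep4
        _ = ENNReal.ofReal ((((mk:ℝ) - 1) * ((ml:ℝ) - 1)) *
            (((1 / (ank n * bk * x)) * CM) * (((4 / y) * (n:ℝ)⁻¹) ^ (1/q)))) := by
            rw [ENNReal.ofReal_mul (mul_nonneg hmk1' hml1'), ENNReal.ofReal_mul hmk1',
              ENNReal.ofReal_mul (mul_nonneg (by positivity) hCM0),
              ENNReal.ofReal_mul (by positivity : (0:ℝ) ≤ 1 / (ank n * bk * x))]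
    have hreal : (μ {ω | ank n * bk * x < 1 / (Rk ω * Sk ω) ∧
          anl n * y < 1 / (Rl ω * Sl ω)}).toReal
        ≤ (((mk:ℝ) - 1) * ((ml:ℝ) - 1)) *
            (((1 / (ank n * bk * x)) * CM) * (((4 / y) * (n:ℝ)⁻¹) ^ (1/q))) := by
      rw [← ENNReal.le_ofReal_iff_toReal_le (measure_ne_top _ _) (by positivity)]
      exact hcomb
    -- real arithmetic
    have hD : ((4 / y) * (n:ℝ)⁻¹) ^ (1/q) = (4 / y) ^ (1/q) * (n:ℝ) ^ (-(1/q)) := by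
      rw [Real.mul_rpow (by positivity) (by positivity),
        Real.inv_rpow (by positivity), ← Real.rpow_neg (by positivity)]
    have hnc : (n:ℝ) * (1 / (ank n * bk * x)) ≤ 4 / (bk * x) := by
      have hbx : (0:ℝ) < bk * x := mul_pos hbkpos hx
      have hcge : (n:ℝ)/4 * (bk * x) ≤ ank n * bk * x := by
        calc (n:ℝ)/4 * (bk * x) ≤ ank n * (bk * x) :=
              mul_le_mul_of_nonneg_right h4 hbx.le
          _ = ank n * bk * x := by ring
      have hlow : (0:ℝ) < (n:ℝ)/4 * (bk * x) := by positivity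
      have h14 : 1 / (ank n * bk * x) ≤ 1 / ((n:ℝ)/4 * (bk * x)) :=
        one_div_le_one_div_of_le hlow hcge
      have heq : (n:ℝ) * (1 / ((n:ℝ)/4 * (bk * x))) = 4 / (bk * x) := by
        field_simp
      calc (n:ℝ) * (1 / (ank n * bk * x)) ≤ (n:ℝ) * (1 / ((n:ℝ)/4 * (bk * x))) :=
            mul_le_mul_of_nonneg_left h14 hnpos.le
        _ = 4 / (bk * x) := heq
    calc (n : ℝ) * (μ {ω | ank n * bk * x < 1 / (Rk ω * Sk ω) ∧
          anl n * y < 1 / (Rl ω * Sl ω)}).toReal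
        ≤ (n : ℝ) * ((((mk:ℝ) - 1) * ((ml:ℝ) - 1)) *
            (((1 / (ank n * bk * x)) * CM) * (((4 / y) * (n:ℝ)⁻¹) ^ (1/q)))) :=
          mul_le_mul_of_nonneg_left hreal hnpos.le
      _ = ((((mk:ℝ) - 1) * ((ml:ℝ) - 1)) * CM * ((4 / y) ^ (1/q)) * ((n:ℝ) ^ (-(1/q)))) *
            ((n:ℝ) * (1 / (ank n * bk * x))) := by
          rw [hD]; ring
      _ ≤ ((((mk:ℝ) - 1) * ((ml:ℝ) - 1)) * CM * ((4 / y) ^ (1/q)) * ((n:ℝ) ^ (-(1/q)))) *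
            (4 / (bk * x)) := by
          refine mul_le_mul_of_nonneg_left hnc ?_
          have h1' : (0:ℝ) ≤ (4 / y) ^ (1/q) := Real.rpow_nonneg (by positivity) _
          have h2' : (0:ℝ) ≤ (n:ℝ) ^ (-(1/q)) := Real.rpow_nonneg (by positivity) _
          positivity
      _ = Cst * (n:ℝ) ^ (-(1/q)) := by
          rw [hCstdef]; ring
  -- conclude by squeezing
  have h0 : Tendsto (fun n : ℕ => ((n:ℝ)) ^ (-(1/q))) atTop (𝓝 0) :=
    (tendsto_rpow_neg_atTop (by positivity)).comp tendsto_natCast_atTop_atTop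
  refine squeeze_zero' (Eventually.of_forall fun n => by positivity) main ?_
  simpa using h0.const_mul Cst
end

section
/- (Joint limit for light-tailed clusters.) Let K ≥ 1 and integers d_1,…,d_K ≥ 2. For each k ∈ {1,…,K}, let ℓ_k be a d_k-variate stable tail dependence function in d-norm form, and let S_k = (S_{k1},…,S_{k d_k}) have the ℓ_k-simplex distribution; assume S_1,…,S_K are mutually independent. Let R = (R_1,…,R_K) be a positive random vector, independent of (S_1,…,S_K), such that for each k there exists ε_k > 0 with E[(1/R_k)^{1+ε_k}] < ∞; set b_k = E[1/R_k]. For each k, let (a_{nk}) be positive constants such that n·P(1/S_{k1} > a_{nk} x) → 1/x for all x > 0. Then for every x = (x_{ki})_{1≤k≤K, 1≤i≤d_k} with all x_{ki} > 0, n·(1 − P(1/(R_k S_{ki}) ≤ a_{nk} b_k x_{ki} for all k and i)) → Σ_{k=1}^{K} ℓ_k(1/x_{k1},…,1/x_{k d_k}) as n → ∞. -/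
open MeasureTheory ProbabilityTheory Filter
open scoped Topology

/-- A `d`-variate stable tail dependence function in d-norm form:
`ℓ x = E[max_i x i * W i]` for some integrable, a.s. positive random variables `W i`,
each with unit mean. -/
def IsDNormStdf {d : ℕ} (ℓ : (Fin d → ℝ) → ℝ) : Prop :=
  ∃ (Ω' : Type) (_ : MeasurableSpace Ω') (μ' : Measure Ω') (W : Fin d → Ω' → ℝ),
    IsProbabilityMeasure μ' ∧
    (∀ i, Measurable (W i)) ∧
    (∀ i, Integrable (W i) μ') ∧
    (∀ i, ∀ᵐ ω ∂μ', 0 < W i ω) ∧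
    (∀ i, ∫ ω, W i ω ∂μ' = 1) ∧
    ∀ x : Fin d → ℝ, ℓ x = ∫ ω, (⨆ i, x i * W i ω) ∂μ'

-- ## Auxiliary lemmas

lemma geom_aux (m : ℕ) (u : ℝ) :
    1 - (1 - u) ^ m = u * ∑ j ∈ Finset.range m, (1 - u) ^ j := by
  induction m with
  | zero => simp
  | succ m ih =>
    rw [Finset.sum_range_succ, pow_succ]
    nlinarith [ih]

lemma aux_tendsto_zero {u : ℕ → ℝ} {ζ : ℝ}
    (h : Tendsto (fun n : ℕ => (n : ℝ) * u n) atTop (𝓝 ζ)) :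
    Tendsto u atTop (𝓝 0) := by
  have h2 : Tendsto (fun n : ℕ => ((n : ℝ) * u n) * (n : ℝ)⁻¹) atTop (𝓝 (ζ * 0)) :=
    h.mul tendsto_inv_atTop_nhds_zero_nat
  rw [mul_zero] at h2
  refine h2.congr' ?_
  filter_upwards [eventually_ge_atTop 1] with n hn
  have : (n : ℝ) ≠ 0 := by positivity
  field_simp

lemma aux_tendsto_one {p : ℕ → ℝ} {β : ℝ}
    (h : Tendsto (fun n : ℕ => (n : ℝ) * (1 - p n)) atTop (𝓝 β)) :
    Tendsto p atTop (𝓝 1) := by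
  have h0 : Tendsto (fun n : ℕ => 1 - p n) atTop (𝓝 0) := aux_tendsto_zero h
  have := (tendsto_const_nhds (x := (1:ℝ)) (f := atTop)).sub h0
  simpa using this

lemma sum_pow_tendsto {u : ℕ → ℝ} (hu0 : Tendsto u atTop (𝓝 0)) (m : ℕ) :
    Tendsto (fun n : ℕ => ∑ j ∈ Finset.range m, (1 - u n) ^ j) atTop (𝓝 (m : ℝ)) := by
  have h1 : Tendsto (fun n : ℕ => 1 - u n) atTop (𝓝 1) := by
    have := (tendsto_const_nhds (x := (1:ℝ)) (f := atTop)).sub hu0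
    simpa using this
  have : Tendsto (fun n : ℕ => ∑ j ∈ Finset.range m, (1 - u n) ^ j) atTop
      (𝓝 (∑ j ∈ Finset.range m, (1:ℝ) ^ j)) :=
    tendsto_finset_sum _ fun j _ => (h1.pow j).congr (fun n => rfl) |>.mono_right
      (by rw [one_pow])
  simpa using this

lemma lim_pow (m : ℕ) (u : ℕ → ℝ) (ζ : ℝ)
    (h : Tendsto (fun n : ℕ => (n : ℝ) * u n) atTop (𝓝 ζ)) :
    Tendsto (fun n : ℕ => (n : ℝ) * (1 - (max 0 (1 - u n)) ^ m)) atTop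
      (𝓝 ((m : ℝ) * ζ)) := by
  have hu0 : Tendsto u atTop (𝓝 0) := aux_tendsto_zero h
  have hmul : Tendsto (fun n : ℕ => ((n : ℝ) * u n) * ∑ j ∈ Finset.range m, (1 - u n) ^ j)
      atTop (𝓝 (ζ * m)) := h.mul (sum_pow_tendsto hu0 m)
  rw [mul_comm] at hmul
  refine hmul.congr' ?_
  filter_upwards [hu0.eventually_lt_const (by norm_num : (0:ℝ) < 1)] with n hn
  have h1 : max 0 (1 - u n) = 1 - u n := max_eq_right (by linarith)
  rw [h1, geom_aux m (u n)]
  ring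

lemma lim_prod {ι : Type*} [DecidableEq ι] (s : Finset ι) (p : ℕ → ι → ℝ) (β : ι → ℝ)
    (h : ∀ k ∈ s, Tendsto (fun n : ℕ => (n : ℝ) * (1 - p n k)) atTop (𝓝 (β k))) :
    Tendsto (fun n : ℕ => (n : ℝ) * (1 - ∏ k ∈ s, p n k)) atTop (𝓝 (∑ k ∈ s, β k)) := by
  induction s using Finset.induction_on with
  | empty => simpa using tendsto_const_nhds
  | @insert a s' ha ih =>
    have hha := h a (Finset.mem_insert_self a s')
    have hih := ih fun k hk => h k (Finset.mem_insert_of_mem hk)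
    have hpa : Tendsto (fun n => p n a) atTop (𝓝 1) := aux_tendsto_one hha
    have : Tendsto (fun n : ℕ => (n : ℝ) * (1 - p n a) + p n a * ((n : ℝ) * (1 - ∏ k ∈ s', p n k)))
        atTop (𝓝 (β a + 1 * ∑ k ∈ s', β k)) := hha.add (hpa.mul hih)
    rw [Finset.sum_insert ha]
    rw [one_mul] at this
    refine this.congr fun n => ?_
    rw [Finset.prod_insert ha]
    ring

lemma one_sub_prod_le {ι : Type*} (s : Finset ι) (p : ι → ℝ)
    (h0 : ∀ k ∈ s, 0 ≤ p k) (h1 : ∀ k ∈ s, p k ≤ 1) :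
    1 - ∏ k ∈ s, p k ≤ ∑ k ∈ s, (1 - p k) := by
  classical
  induction s using Finset.induction_on with
  | empty => simp
  | @insert a s' ha ih =>
    have hprod0 : 0 ≤ ∏ k ∈ s', p k := Finset.prod_nonneg fun k hk => h0 k (Finset.mem_insert_of_mem hk)
    have hprod1 : ∏ k ∈ s', p k ≤ 1 := Finset.prod_le_one
      (fun k hk => h0 k (Finset.mem_insert_of_mem hk)) (fun k hk => h1 k (Finset.mem_insert_of_mem hk))
    have hia := ih (fun k hk => h0 k (Finset.mem_insert_of_mem hk))
      (fun k hk => h1 k (Finset.mem_insert_of_mem hk))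
    rw [Finset.prod_insert ha, Finset.sum_insert ha]
    have h0a := h0 a (Finset.mem_insert_self a s')
    have h1a := h1 a (Finset.mem_insert_self a s')
    nlinarith

lemma one_sub_maxpow_le {u : ℝ} (hu : 0 ≤ u) {m : ℕ} (hm : 1 ≤ m) :
    1 - (max 0 (1 - u)) ^ m ≤ m * u := by
  rcases le_or_gt 1 u with h | h
  · have : max 0 (1 - u) = 0 := max_eq_left (by linarith)
    rw [this, zero_pow (by omega)]
    have : (1:ℝ) ≤ (m:ℝ) * u := by
      have : (1:ℝ) ≤ (m:ℝ) := by exact_mod_cast hm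
      nlinarith
    linarith
  · have hmax : max 0 (1 - u) = 1 - u := max_eq_right (by linarith)
    rw [hmax]
    have := one_add_mul_le_pow (a := -u) (by linarith) m
    simp only [← sub_eq_add_neg, mul_neg] at this
    linarith

lemma lim_ratio (m : ℕ) (hm : 1 ≤ m) (a : ℕ → ℝ) (ha : ∀ n, 0 < a n)
    (h : Tendsto (fun n : ℕ => (n : ℝ) * (1 - (max 0 (1 - 1 / a n)) ^ m)) atTop (𝓝 1)) :
    Tendsto (fun n : ℕ => (n : ℝ) / a n) atTop (𝓝 (1 / (m : ℝ))) := by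
  set t : ℕ → ℝ := fun n => max 0 (1 - 1 / a n) with ht
  have ht0 : ∀ n, 0 ≤ t n := fun n => le_max_left _ _
  have ht1 : ∀ n, t n ≤ 1 := fun n => by
    have : 0 < 1 / a n := one_div_pos.mpr (ha n)
    apply max_le <;> linarith
  have hc0 : Tendsto (fun n => 1 - t n ^ m) atTop (𝓝 0) := aux_tendsto_zero h
  have htm1 : Tendsto (fun n => t n ^ m) atTop (𝓝 1) := by
    have := (tendsto_const_nhds (x := (1:ℝ)) (f := atTop)).sub hc0
    simpa using this
  have htt : Tendsto t atTop (𝓝 1) := by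
    refine tendsto_of_tendsto_of_tendsto_of_le_of_le htm1 tendsto_const_nhds ?_ ?_
    · intro n
      calc t n ^ m ≤ t n ^ 1 := pow_le_pow_of_le_one (ht0 n) (ht1 n) hm
        _ = t n := pow_one _
    · intro n; exact ht1 n
  have hev : ∀ᶠ n in atTop, t n = 1 - 1 / a n := by
    filter_upwards [htt.eventually_const_lt (by norm_num : (0:ℝ) < 1)] with n hn
    rcases max_cases (0:ℝ) (1 - 1 / a n) with ⟨h1, h2⟩ | ⟨h1, h2⟩
    · rw [ht] at hn; simp only at hn; rw [h1] at hn; norm_num at hn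
    · exact h1
  have hu0 : Tendsto (fun n => 1 / a n) atTop (𝓝 0) := by
    have : Tendsto (fun n => 1 - t n) atTop (𝓝 0) := by
      have := (tendsto_const_nhds (x := (1:ℝ)) (f := atTop)).sub htt
      simpa using this
    refine this.congr' ?_
    filter_upwards [hev] with n hn; rw [hn]; ring
  have hsum : Tendsto (fun n : ℕ => ∑ j ∈ Finset.range m, (1 - 1 / a n) ^ j) atTop
      (𝓝 (m : ℝ)) := sum_pow_tendsto hu0 m
  have hmne : (m : ℝ) ≠ 0 := Nat.cast_ne_zero.mpr (by omega)
  have hdiv : Tendsto (fun n : ℕ =>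
      ((n : ℝ) * (1 - t n ^ m)) / (∑ j ∈ Finset.range m, (1 - 1 / a n) ^ j)) atTop
      (𝓝 (1 / (m : ℝ))) := h.div hsum hmne
  refine hdiv.congr' ?_
  have hsumpos : ∀ᶠ n in atTop, (0:ℝ) < ∑ j ∈ Finset.range m, (1 - 1 / a n) ^ j := by
    filter_upwards [hsum.eventually_const_lt (by exact_mod_cast hm.trans_lt (Nat.lt_succ_self m) |> fun _ => Nat.cast_pos.mpr (by omega) : (0:ℝ) < (m:ℝ))] with n hn
    · linarith
  filter_upwards [hev, hsumpos] with n hn hpos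
  rw [hn, geom_aux m (1 / a n)]
  have hsne : (∑ j ∈ Finset.range m, (1 - 1 / a n) ^ j) ≠ 0 := ne_of_gt hpos
  calc (n : ℝ) * (1 / a n * ∑ j ∈ Finset.range m, (1 - 1 / a n) ^ j) /
        (∑ j ∈ Finset.range m, (1 - 1 / a n) ^ j)
      = ((n : ℝ) / a n) * ((∑ j ∈ Finset.range m, (1 - 1 / a n) ^ j) /
        (∑ j ∈ Finset.range m, (1 - 1 / a n) ^ j)) := by ring
    _ = (n : ℝ) / a n := by rw [div_self hsne, mul_one]

lemma stdf_facts {d : ℕ} (hd : 2 ≤ d) {ℓ : (Fin d → ℝ) → ℝ} (h : IsDNormStdf ℓ)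
    (i0 : Fin d) :
    (∀ s : Fin d → ℝ, (∀ i, 0 ≤ s i) → 0 ≤ ℓ s) ∧
    (∀ c : ℝ, 0 ≤ c → ∀ s : Fin d → ℝ, ℓ (fun i => c * s i) = c * ℓ s) ∧
    (∀ u : ℝ, 0 ≤ u → ℓ (fun i => if i = i0 then u else 0) = u) := by
  obtain ⟨Ω', _, μ', W, hprob, hWmeas, hWint, hWpos, hWmean, hℓ⟩ := h
  haveI : Nonempty (Fin d) := ⟨⟨0, by omega⟩⟩
  have hWposall : ∀ᵐ ω ∂μ', ∀ i, 0 < W i ω := (ae_all_iff).mpr hWpos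
  refine ⟨?_, ?_, ?_⟩
  · intro s hs
    rw [hℓ s]
    apply integral_nonneg_of_ae
    filter_upwards [hWposall] with ω hω
    have hbdd : BddAbove (Set.range fun i => s i * W i ω) :=
      Set.Finite.bddAbove (Set.finite_range _)
    have := le_ciSup hbdd (Classical.arbitrary (Fin d))
    have h0 : 0 ≤ s (Classical.arbitrary (Fin d)) * W (Classical.arbitrary (Fin d)) ω :=
      mul_nonneg (hs _) (hω _).le
    simpa using h0.trans this
  · intro c hc s
    rw [hℓ s, hℓ _]
    rw [← integral_const_mul]
    congr 1
    funext ω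
    rw [Real.mul_iSup_of_nonneg hc]
    congr 1; funext i; ring
  · intro u hu
    rw [hℓ _]
    have : ∫ ω, (⨆ i, (if i = i0 then u else 0) * W i ω) ∂μ'
        = ∫ ω, u * W i0 ω ∂μ' := by
      apply integral_congr_ae
      filter_upwards [hWposall] with ω hω
      have hbdd : BddAbove (Set.range fun i => (if i = i0 then u else 0) * W i ω) :=
        Set.Finite.bddAbove (Set.finite_range _)
      apply le_antisymm
      · apply ciSup_le
        intro i
        by_cases hi : i = i0
        · subst hi; simp
        · simp only [hi, if_false, zero_mul]
          exact mul_nonneg hu (hω i0).le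
      · have := le_ciSup hbdd i0
        simpa using this
    rw [this, integral_const_mul, hWmean i0, mul_one]

/-- From the strict-inequality survival function, get the non-strict version, for positive
scaling `u` of a nonnegative direction `v`. -/
lemma surv_ge {Ω : Type*} [MeasurableSpace Ω] {μ : Measure Ω} [IsProbabilityMeasure μ]
    {d : ℕ} {S : Fin d → Ω → ℝ} (hmeas : ∀ i, Measurable (S i))
    {G : ℝ → ℝ} (hG : Continuous G)
    {v : Fin d → ℝ} (hv : ∀ i, 0 ≤ v i)
    (h : ∀ u : ℝ, 0 ≤ u → (μ {ω | ∀ i, u * v i < S i ω}).toReal = G u)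
    {u : ℝ} (hu : 0 < u) :
    (μ {ω | ∀ i, u * v i ≤ S i ω ∧ 0 < S i ω}).toReal = G u := by
  set c : ℕ → ℝ := fun n => u - u / (n + 2) with hc
  have hc0 : ∀ n, 0 < c n := by
    intro n
    have h1 : u / (n + 2) < u := by
      rw [div_lt_iff₀ (by positivity)]
      nlinarith
    simp only [hc]; linarith
  have hclt : ∀ n, c n < u := by
    intro n
    have : 0 < u / (n + 2) := by positivity
    simp only [hc]; linarith
  have hcmono : Monotone c := by
    intro n m hnm
    have h2 : (0:ℝ) < n + 2 := by positivity
    have h3 : (0:ℝ) < m + 2 := by positivity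
    have : u / (m + 2) ≤ u / (n + 2) := by
      apply div_le_div_of_nonneg_left hu.le h2
      have : (n:ℝ) ≤ (m:ℝ) := Nat.cast_le.mpr hnm
      linarith
    simp only [hc]; linarith
  have hctend : Tendsto c atTop (𝓝 u) := by
    have : Tendsto (fun n : ℕ => u / (n + 2)) atTop (𝓝 0) := by
      apply Tendsto.div_atTop (tendsto_const_nhds)
      exact tendsto_atTop_add_const_right _ 2 tendsto_natCast_atTop_atTop
    have h2 := (tendsto_const_nhds (x := u) (f := atTop)).sub this
    simpa using h2
  set A : ℕ → Set Ω := fun n => {ω | ∀ i, c n * v i < S i ω} with hA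
  have hAmeas : ∀ n, MeasurableSet (A n) := by
    intro n
    have : A n = ⋂ i, {ω | c n * v i < S i ω} := by ext ω; simp [hA, Set.mem_iInter]
    rw [this]
    exact MeasurableSet.iInter fun i => measurableSet_lt measurable_const (hmeas i)
  have hAanti : Antitone A := by
    intro n m hnm ω hω i
    exact lt_of_le_of_lt (mul_le_mul_of_nonneg_right (hcmono hnm) (hv i)) (hω i)
  have hInter : ⋂ n, A n = {ω | ∀ i, u * v i ≤ S i ω ∧ 0 < S i ω} := by
    ext ω
    simp only [Set.mem_iInter, hA, Set.mem_setOf_eq]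
    constructor
    · intro hω i
      constructor
      · have hlim : Tendsto (fun n => c n * v i) atTop (𝓝 (u * v i)) :=
          hctend.mul_const (v i)
        exact le_of_tendsto hlim (Eventually.of_forall fun n => (hω n i).le)
      · rcases eq_or_lt_of_le (hv i) with hvi | hvi
        · have := hω 0 i; rw [← hvi, mul_zero] at this; exact this
        · calc (0:ℝ) < c 0 * v i := mul_pos (hc0 0) hvi
            _ < S i ω := hω 0 i
    · intro hω n i
      rcases eq_or_lt_of_le (hv i) with hvi | hvi
      · rw [← hvi, mul_zero]; exact (hω i).2
      · calc c n * v i < u * v i := by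
              apply mul_lt_mul_of_pos_right (hclt n) hvi
          _ ≤ S i ω := (hω i).1
  have htend : Tendsto (μ ∘ A) atTop (𝓝 (μ (⋂ n, A n))) :=
    tendsto_measure_iInter_atTop (fun n => (hAmeas n).nullMeasurableSet) hAanti
      ⟨0, measure_ne_top μ _⟩
  have htoReal : Tendsto (fun n => (μ (A n)).toReal) atTop (𝓝 ((μ (⋂ n, A n)).toReal)) :=
    (ENNReal.tendsto_toReal (measure_ne_top μ _)).comp htend
  have heq : ∀ n, (μ (A n)).toReal = G (c n) := fun n => h (c n) (hc0 n).le
  have hGc : Tendsto (fun n => G (c n)) atTop (𝓝 (G u)) :=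
    (hG.tendsto u).comp hctend
  have := htoReal.congr heq
  rw [hInter] at this
  exact tendsto_nhds_unique this hGc

-- extra small helpers
section SmallHelpers
variable {Ω : Type*} [MeasurableSpace Ω] {μ : Measure Ω} [IsProbabilityMeasure μ]

lemma meas_eq_one_of_ae {P : Ω → Prop} (h : ∀ᵐ ω ∂μ, P ω) : μ {ω | P ω} = 1 := by
  rw [← measure_univ (μ := μ)]
  apply measure_congr
  rw [Filter.eventuallyEq_set]
  filter_upwards [h] with ω hω
  simp [hω]

lemma ae_of_toReal_eq_one {P : Ω → Prop} (hm : MeasurableSet {ω | P ω})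
    (h : (μ {ω | P ω}).toReal = 1) : ∀ᵐ ω ∂μ, P ω := by
  have h1 : μ {ω | P ω} = 1 := by
    rw [← ENNReal.ofReal_toReal (measure_ne_top μ _), h]; simp
  rw [ae_iff]
  have hcompl : {ω | ¬ P ω} = {ω | P ω}ᶜ := rfl
  rw [hcompl, measure_compl hm (measure_ne_top μ _), h1, measure_univ, tsub_self]

end SmallHelpers

set_option maxHeartbeats 2000000 in
/-- (Joint limit for light-tailed clusters.) -/
theorem stmt_10
    {Ω : Type*} [MeasurableSpace Ω] (μ : Measure Ω) [IsProbabilityMeasure μ]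
    (K : ℕ) (hK : 1 ≤ K)
    (d : Fin K → ℕ) (hd : ∀ k, 2 ≤ d k)
    (ℓ : (k : Fin K) → (Fin (d k) → ℝ) → ℝ)
    (hℓ : ∀ k, IsDNormStdf (ℓ k))
    (S : (k : Fin K) → Fin (d k) → Ω → ℝ)
    (hSmeas : ∀ k i, Measurable (S k i))
    (hSsurv : ∀ k, ∀ s : Fin (d k) → ℝ, (∀ i, 0 ≤ s i) →
      (μ {ω | ∀ i, s i < S k i ω}).toReal = max 0 (1 - ℓ k s) ^ (d k - 1))
    (hSindep : iIndepFun (fun k ω i => S k i ω) μ)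
    (R : Fin K → Ω → ℝ)
    (hRmeas : ∀ k, Measurable (R k))
    (hRpos : ∀ k, ∀ᵐ ω ∂μ, 0 < R k ω)
    (hRSindep : IndepFun (fun ω k => R k ω) (fun ω k i => S k i ω) μ)
    (ε : Fin K → ℝ) (hε : ∀ k, 0 < ε k)
    (hmom : ∀ k, Integrable (fun ω => (1 / R k ω) ^ (1 + ε k)) μ)
    (b : Fin K → ℝ) (hb : ∀ k, b k = ∫ ω, 1 / R k ω ∂μ)
    (a : ℕ → Fin K → ℝ) (ha : ∀ n k, 0 < a n k)
    (haS : ∀ k, ∀ x : ℝ, 0 < x →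
      Tendsto
        (fun n : ℕ =>
          (n : ℝ) *
            (μ {ω | a n k * x <
              1 / S k (⟨0, by have := hd k; omega⟩ : Fin (d k)) ω}).toReal)
        atTop (𝓝 (1 / x))) :
    ∀ x : (k : Fin K) → Fin (d k) → ℝ, (∀ k i, 0 < x k i) →
      Tendsto
        (fun n : ℕ =>
          (n : ℝ) * (1 - (μ {ω | ∀ k i,
            1 / (R k ω * S k i ω) ≤ a n k * b k * x k i}).toReal))
        atTop (𝓝 (∑ k, ℓ k (fun i => 1 / x k i))) := by
  classical
  intro x hx
  -- Notation
  set m : Fin K → ℕ := fun k => d k - 1 with hm_def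
  have hm : ∀ k, 1 ≤ m k := fun k => by have := hd k; simp only [hm_def]; omega
  have hmne : ∀ k, (m k : ℝ) ≠ 0 := fun k => Nat.cast_ne_zero.mpr (by have := hm k; omega)
  set i0 : (k : Fin K) → Fin (d k) := fun k => ⟨0, by have := hd k; omega⟩ with hi0_def
  set L : Fin K → ℝ := fun k => ℓ k (fun i => 1 / x k i) with hL_def
  have hfacts := fun k => stdf_facts (hd k) (hℓ k) (i0 k)
  have hvpos : ∀ k i, 0 < 1 / x k i := fun k i => one_div_pos.mpr (hx k i)
  have hL0 : ∀ k, 0 ≤ L k := fun k => (hfacts k).1 _ (fun i => (hvpos k i).le)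
  -- a.s. positivity of the S's
  have hSpos : ∀ k, ∀ᵐ ω ∂μ, ∀ i, 0 < S k i ω := by
    intro k
    have hms : MeasurableSet {ω : Ω | ∀ i, 0 < S k i ω} := by
      have : {ω : Ω | ∀ i, 0 < S k i ω} = ⋂ i, {ω | 0 < S k i ω} := by ext ω; simp
      rw [this]
      exact MeasurableSet.iInter fun i => measurableSet_lt measurable_const (hSmeas k i)
    apply ae_of_toReal_eq_one hms
    have h0 : (fun (_ : Fin (d k)) => (0:ℝ)) = fun i => if i = i0 k then (0:ℝ) else 0 := by
      funext i; simp
    have hl0 : ℓ k (fun _ => (0:ℝ)) = 0 := by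
      rw [h0]; exact (hfacts k).2.2 0 le_rfl
    have := hSsurv k (fun _ => 0) (fun i => le_rfl)
    rw [hl0] at this
    simpa using this
  -- scaled survival function, strict version
  have hsurv' : ∀ k (u : ℝ), 0 ≤ u →
      (μ {ω | ∀ i, u * (1 / x k i) < S k i ω}).toReal = max 0 (1 - u * L k) ^ m k := by
    intro k u hu
    have hhom : ℓ k (fun i => u * (1 / x k i)) = u * L k := (hfacts k).2.1 u hu _
    have := hSsurv k (fun i => u * (1 / x k i)) (fun i => mul_nonneg hu (hvpos k i).le)
    rw [hhom] at this
    exact this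
  -- scaled survival function, non-strict version
  have hGcont : ∀ k, Continuous (fun u : ℝ => max 0 (1 - u * L k) ^ m k) := by
    intro k
    exact (continuous_const.max (continuous_const.sub (continuous_id.mul continuous_const))).pow _
  have hsurvge : ∀ k (u : ℝ), 0 < u →
      (μ {ω | ∀ i, u * (1 / x k i) ≤ S k i ω ∧ 0 < S k i ω}).toReal
        = max 0 (1 - u * L k) ^ m k := by
    intro k u hu
    exact surv_ge (hSmeas k) (hGcont k) (fun i => (hvpos k i).le) (hsurv' k) hu
  -- marginal survival function and the ratio limit
  have hratio : ∀ k, Tendsto (fun n : ℕ => (n : ℝ) / a n k) atTop (𝓝 (1 / (m k : ℝ))) := by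
    intro k
    -- the marginal survival function of `S k (i0 k)`
    have hmarg : ∀ w : ℝ, 0 < w →
        (μ {ω | w ≤ S k (i0 k) ω}).toReal = max 0 (1 - w) ^ m k := by
      intro w hw
      have hstrict : ∀ u : ℝ, 0 ≤ u →
          (μ {ω | ∀ i, u * (if i = i0 k then (1:ℝ) else 0) < S k i ω}).toReal
            = max 0 (1 - u) ^ m k := by
        intro u hu
        have hseq : (fun i => u * (if i = i0 k then (1:ℝ) else 0))
            = fun i => if i = i0 k then u else 0 := by
          funext i; by_cases h : i = i0 k <;> simp [h]
        have hl : ℓ k (fun i => u * (if i = i0 k then (1:ℝ) else 0)) = u := by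
          rw [hseq]; exact (hfacts k).2.2 u hu
        have := hSsurv k (fun i => u * (if i = i0 k then (1:ℝ) else 0))
          (fun i => mul_nonneg hu (by by_cases h : i = i0 k <;> simp [h]))
        rw [hl] at this
        exact this
      have hGcont' : Continuous (fun u : ℝ => max 0 (1 - u) ^ m k) :=
        (continuous_const.max (continuous_const.sub continuous_id)).pow _
      have hge := surv_ge (hSmeas k) hGcont'
        (v := fun i => if i = i0 k then (1:ℝ) else 0)
        (fun i => by by_cases h : i = i0 k <;> simp [h]) hstrict hw
      have haeq : {ω | ∀ i, w * (if i = i0 k then (1:ℝ) else 0) ≤ S k i ω ∧ 0 < S k i ω}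
          =ᵐ[μ] {ω | w ≤ S k (i0 k) ω} := by
        rw [Filter.eventuallyEq_set]
        filter_upwards [hSpos k] with ω hω
        constructor
        · intro h
          have := (h (i0 k)).1
          simpa using this
        · intro h i
          refine ⟨?_, hω i⟩
          by_cases hi : i = i0 k
          · subst hi; simpa using h
          · simp only [hi, if_false, mul_zero]
            exact (hω i).le
      rw [← measure_congr haeq]
      exact hge
    -- rewriting the marginal tail event
    have hev : ∀ n : ℕ, (μ {ω | a n k * 1 < 1 / S k (i0 k) ω}).toReal
        = 1 - max 0 (1 - 1 / a n k) ^ m k := by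
      intro n
      have hw : (0:ℝ) < 1 / a n k := one_div_pos.mpr (ha n k)
      have hBmeas : MeasurableSet {ω | 1 / a n k ≤ S k (i0 k) ω} :=
        measurableSet_le measurable_const (hSmeas k (i0 k))
      have haeq : ({ω | a n k * 1 < 1 / S k (i0 k) ω} : Set Ω)
          =ᵐ[μ] (({ω | 1 / a n k ≤ S k (i0 k) ω} : Set Ω)ᶜ : Set Ω) := by
        rw [Filter.eventuallyEq_set]
        filter_upwards [hSpos k] with ω hω
        have hσ : 0 < S k (i0 k) ω := hω (i0 k)
        show a n k * 1 < 1 / S k (i0 k) ω ↔ ¬ (1 / a n k ≤ S k (i0 k) ω)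
        rw [mul_one, not_le, lt_div_iff₀ hσ, lt_div_iff₀ (ha n k), mul_comm]
      rw [measure_congr haeq, measure_compl hBmeas (measure_ne_top μ _), measure_univ,
        ENNReal.toReal_sub_of_le prob_le_one (by simp), ENNReal.toReal_one,
        hmarg (1 / a n k) hw]
    have h1 := haS k 1 one_pos
    rw [div_one] at h1
    have h2 : Tendsto (fun n : ℕ =>
        (n : ℝ) * (1 - max 0 (1 - 1 / a n k) ^ m k)) atTop (𝓝 1) := by
      refine h1.congr fun n => ?_
      rw [hev n]
    exact lim_ratio (m k) (hm k) (fun n => a n k) (fun n => ha n k) h2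
  -- integrability of 1/R
  have h1Rint : ∀ k, Integrable (fun ω => (R k ω)⁻¹) μ := by
    intro k
    refine Integrable.mono' ((integrable_const (1:ℝ)).add (hmom k))
      ((hRmeas k).inv).aestronglyMeasurable ?_
    filter_upwards [hRpos k] with ω hρ
    have hy : 0 < (R k ω)⁻¹ := inv_pos.mpr hρ
    rw [Real.norm_eq_abs, abs_of_pos hy]
    have hy1 : (1 / R k ω) = (R k ω)⁻¹ := one_div _
    rcases le_or_gt ((R k ω)⁻¹) 1 with h | h
    · have h0 : (0:ℝ) ≤ (1 / R k ω) ^ (1 + ε k) := Real.rpow_nonneg (by positivity) _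
      simp only [Pi.add_apply]
      linarith
    · have h2 : ((R k ω)⁻¹ : ℝ) ^ (1:ℝ) ≤ ((R k ω)⁻¹) ^ (1 + ε k) :=
        Real.rpow_le_rpow_of_exponent_le h.le (by linarith [hε k])
      rw [Real.rpow_one] at h2
      simp only [Pi.add_apply, hy1]
      linarith
  have hbpos : ∀ k, 0 < b k := by
    intro k
    rw [hb k]
    have hint : Integrable (fun ω => 1 / R k ω) μ := by
      simpa [one_div] using h1Rint k
    have hae : 0 ≤ᵐ[μ] (fun ω => 1 / R k ω) := by
      filter_upwards [hRpos k] with ω hω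
      have : 0 < 1 / R k ω := one_div_pos.mpr hω
      exact this.le
    rw [integral_pos_iff_support_of_nonneg_ae hae hint]
    have hsub : {ω | 0 < R k ω} ⊆ Function.support (fun ω => 1 / R k ω) := by
      intro ω hω
      exact ne_of_gt (one_div_pos.mpr hω)
    calc (0:ENNReal) < 1 := by norm_num
      _ = μ {ω | 0 < R k ω} := (meas_eq_one_of_ae (hRpos k)).symm
      _ ≤ μ (Function.support fun ω => 1 / R k ω) := measure_mono hsub
  -- the measure map machinery
  set X : Ω → (Fin K → ℝ) := fun ω k => R k ω with hX_def
  set Y : Ω → ((k : Fin K) → Fin (d k) → ℝ) := fun ω k i => S k i ω with hY_def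
  have hXmeas : Measurable X := measurable_pi_lambda _ fun k => hRmeas k
  have hYmeas : Measurable Y := measurable_pi_lambda _ fun k =>
    measurable_pi_lambda _ fun i => hSmeas k i
  set ν : Measure (Fin K → ℝ) := μ.map X with hν_def
  haveI hνprob : IsProbabilityMeasure ν := Measure.isProbabilityMeasure_map hXmeas.aemeasurable
  haveI : IsProbabilityMeasure (μ.map Y) := Measure.isProbabilityMeasure_map hYmeas.aemeasurable
  have hνpos : ∀ᵐ ρ ∂ν, ∀ k, 0 < ρ k := by
    rw [hν_def, ae_map_iff hXmeas.aemeasurable]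
    · exact ae_all_iff.mpr hRpos
    · have : {ρ : Fin K → ℝ | ∀ k, 0 < ρ k} = ⋂ k, {ρ | 0 < ρ k} := by ext ρ; simp
      rw [this]
      exact MeasurableSet.iInter fun k =>
        measurableSet_lt measurable_const (measurable_pi_apply k)
  set φ : ℕ → (Fin K → ℝ) → ℝ := fun n ρ =>
    ∏ k, max 0 (1 - 1 / (a n k * b k * ρ k) * L k) ^ m k with hφ_def
  have hφmeas : ∀ n, Measurable (φ n) := by
    intro n
    have hfacm : ∀ k : Fin K, Measurable (fun ρ : Fin K → ℝ =>
        max 0 (1 - 1 / (a n k * b k * ρ k) * L k) ^ m k) := fun k => by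
      fun_prop
    exact Finset.measurable_prod Finset.univ fun k _ => hfacm k
  have hφ0 : ∀ n ρ, 0 ≤ φ n ρ := by
    intro n ρ
    exact Finset.prod_nonneg fun k _ => pow_nonneg (le_max_left _ _) _
  have hφ1 : ∀ n, ∀ ρ : Fin K → ℝ, (∀ k, 0 < ρ k) → φ n ρ ≤ 1 := by
    intro n ρ hρ
    apply Finset.prod_le_one (fun k _ => pow_nonneg (le_max_left _ _) _)
    intro k _
    apply pow_le_one₀ (le_max_left _ _)
    apply max_le zero_le_one
    have h1 : (0:ℝ) < a n k * b k * ρ k := mul_pos (mul_pos (ha n k) (hbpos k)) (hρ k)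
    have : 0 ≤ 1 / (a n k * b k * ρ k) * L k :=
      mul_nonneg (one_div_pos.mpr h1).le (hL0 k)
    linarith
  -- the key identity
  have hkey : ∀ n, μ {ω | ∀ k i, 1 / (R k ω * S k i ω) ≤ a n k * b k * x k i}
      = ∫⁻ ρ, ENNReal.ofReal (φ n ρ) ∂ν := by
    intro n
    have haeset : {ω | ∀ k i, 1 / (R k ω * S k i ω) ≤ a n k * b k * x k i}
        =ᵐ[μ] {ω | ∀ (k : Fin K) (i : Fin (d k)),
            1 / (a n k * b k * X ω k) * (1 / x k i) ≤ Y ω k i} := by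
      rw [Filter.eventuallyEq_set]
      filter_upwards [ae_all_iff.mpr hRpos, ae_all_iff.mpr hSpos] with ω hR hS
      show (∀ k i, _ ≤ _) ↔ (∀ k i, _ ≤ _)
      refine forall_congr' fun k => forall_congr' fun i => ?_
      have hρ : 0 < R k ω := hR k
      have hσ : 0 < S k i ω := hS k i
      have hA : 0 < a n k * b k := mul_pos (ha n k) (hbpos k)
      have hxi := hx k i
      rw [div_le_iff₀ (mul_pos hρ hσ), div_mul_div_comm, one_mul,
        div_le_iff₀ (by positivity)]
      constructor <;> intro h <;> nlinarith
    rw [measure_congr haeset]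
    have hC : MeasurableSet {q : (Fin K → ℝ) × ((k : Fin K) → Fin (d k) → ℝ) |
        ∀ k i, 1 / (a n k * b k * q.1 k) * (1 / x k i) ≤ q.2 k i} := by
      have heq : {q : (Fin K → ℝ) × ((k : Fin K) → Fin (d k) → ℝ) |
          ∀ k i, 1 / (a n k * b k * q.1 k) * (1 / x k i) ≤ q.2 k i}
          = ⋂ k, ⋂ i, {q : (Fin K → ℝ) × ((k : Fin K) → Fin (d k) → ℝ) |
              1 / (a n k * b k * q.1 k) * (1 / x k i) ≤ q.2 k i} := by
        ext q; simp [Set.mem_iInter]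
      rw [heq]
      refine MeasurableSet.iInter fun k => MeasurableSet.iInter fun i => ?_
      apply measurableSet_le
      · have hq1 : Measurable (fun q : (Fin K → ℝ) × ((k : Fin K) → Fin (d k) → ℝ) =>
            q.1 k) := (measurable_pi_apply k).comp measurable_fst
        exact (measurable_const.div (hq1.const_mul (a n k * b k))).mul_const _
      · have hq2 : Measurable (fun q : (Fin K → ℝ) × ((k : Fin K) → Fin (d k) → ℝ) =>
            q.2 k i) := (measurable_pi_apply i).comp
              ((measurable_pi_apply k).comp measurable_snd)
        exact hq2
    have hmapeq : μ.map (fun ω => (X ω, Y ω)) = ν.prod (μ.map Y) :=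
      (indepFun_iff_map_prod_eq_prod_map_map hXmeas.aemeasurable hYmeas.aemeasurable).mp
        hRSindep
    have h1 : μ {ω | ∀ (k : Fin K) (i : Fin (d k)),
          1 / (a n k * b k * X ω k) * (1 / x k i) ≤ Y ω k i}
        = (ν.prod (μ.map Y)) {q | ∀ k i, 1 / (a n k * b k * q.1 k) * (1 / x k i) ≤ q.2 k i} := by
      rw [← hmapeq, Measure.map_apply (hXmeas.prodMk hYmeas) hC]
      rfl
    rw [h1, Measure.prod_apply hC]
    apply lintegral_congr_ae
    filter_upwards [hνpos] with ρ hρ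
    have hslice : (Prod.mk ρ ⁻¹' {q : (Fin K → ℝ) × ((k : Fin K) → Fin (d k) → ℝ) |
          ∀ k i, 1 / (a n k * b k * q.1 k) * (1 / x k i) ≤ q.2 k i})
        = {s : (k : Fin K) → Fin (d k) → ℝ |
            ∀ k i, 1 / (a n k * b k * ρ k) * (1 / x k i) ≤ s k i} := rfl
    rw [hslice]
    have hsetmeas : ∀ k, MeasurableSet {g : Fin (d k) → ℝ |
        ∀ i, 1 / (a n k * b k * ρ k) * (1 / x k i) ≤ g i} := by
      intro k
      have : {g : Fin (d k) → ℝ | ∀ i, 1 / (a n k * b k * ρ k) * (1 / x k i) ≤ g i}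
          = ⋂ i, {g : Fin (d k) → ℝ | 1 / (a n k * b k * ρ k) * (1 / x k i) ≤ g i} := by
        ext g; simp [Set.mem_iInter]
      rw [this]
      exact MeasurableSet.iInter fun i =>
        measurableSet_le measurable_const (measurable_pi_apply i)
    have hallmeas : MeasurableSet {s : (k : Fin K) → Fin (d k) → ℝ |
        ∀ k i, 1 / (a n k * b k * ρ k) * (1 / x k i) ≤ s k i} := by
      have : {s : (k : Fin K) → Fin (d k) → ℝ |
          ∀ k i, 1 / (a n k * b k * ρ k) * (1 / x k i) ≤ s k i}
          = ⋂ k, (fun s : (k : Fin K) → Fin (d k) → ℝ => s k) ⁻¹'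
              {g | ∀ i, 1 / (a n k * b k * ρ k) * (1 / x k i) ≤ g i} := by
        ext s
        simp only [Set.mem_preimage, Set.mem_iInter, Set.mem_setOf_eq]
      rw [this]
      exact MeasurableSet.iInter fun k => (hsetmeas k).preimage (measurable_pi_apply k)
    rw [Measure.map_apply hYmeas hallmeas]
    have hYpre : Y ⁻¹' {s : (k : Fin K) → Fin (d k) → ℝ |
          ∀ k i, 1 / (a n k * b k * ρ k) * (1 / x k i) ≤ s k i}
        = ⋂ k, ((fun ω (i : Fin (d k)) => S k i ω) ⁻¹'
            {g | ∀ i, 1 / (a n k * b k * ρ k) * (1 / x k i) ≤ g i}) := by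
      ext ω
      simp only [Set.mem_preimage, Set.mem_iInter, Set.mem_setOf_eq]
      exact Iff.rfl
    rw [hYpre]
    rw [hSindep.meas_iInter (fun k => ⟨_, hsetmeas k, rfl⟩)]
    have hfac : ∀ k, μ ((fun ω (i : Fin (d k)) => S k i ω) ⁻¹'
          {g | ∀ i, 1 / (a n k * b k * ρ k) * (1 / x k i) ≤ g i})
        = ENNReal.ofReal (max 0 (1 - 1 / (a n k * b k * ρ k) * L k) ^ m k) := by
      intro k
      have hu : 0 < 1 / (a n k * b k * ρ k) := by
        have := hρ k
        have := hbpos k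
        have := ha n k
        positivity
      have haes : ((fun ω (i : Fin (d k)) => S k i ω) ⁻¹'
            {g | ∀ i, 1 / (a n k * b k * ρ k) * (1 / x k i) ≤ g i})
          =ᵐ[μ] {ω | ∀ i, 1 / (a n k * b k * ρ k) * (1 / x k i) ≤ S k i ω
              ∧ 0 < S k i ω} := by
        rw [Filter.eventuallyEq_set]
        filter_upwards [hSpos k] with ω hω
        constructor
        · intro h i
          exact ⟨h i, hω i⟩
        · intro h i
          exact (h i).1
      rw [measure_congr haes, ← ENNReal.ofReal_toReal (measure_ne_top μ _),
        hsurvge k _ hu]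
    rw [Finset.prod_congr rfl (fun k _ => hfac k),
      ← ENNReal.ofReal_prod_of_nonneg (fun k _ => pow_nonneg (le_max_left _ _) _)]
  -- Bochner integral representation
  have hφint : ∀ n, Integrable (φ n) ν := by
    intro n
    refine Integrable.mono' (integrable_const (1:ℝ)) (hφmeas n).aestronglyMeasurable ?_
    filter_upwards [hνpos] with ρ hρ
    rw [Real.norm_eq_abs, abs_of_nonneg (hφ0 n ρ)]
    exact hφ1 n ρ hρ
  have htoReal : ∀ n, (μ {ω | ∀ k i,
        1 / (R k ω * S k i ω) ≤ a n k * b k * x k i}).toReal = ∫ ρ, φ n ρ ∂ν := by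
    intro n
    rw [hkey n, integral_eq_lintegral_of_nonneg_ae
      (Eventually.of_forall (hφ0 n)) (hφmeas n).aestronglyMeasurable]
  have hstep : (fun n : ℕ => (n : ℝ) * (1 - (μ {ω | ∀ k i,
        1 / (R k ω * S k i ω) ≤ a n k * b k * x k i}).toReal))
      = fun n : ℕ => ∫ ρ, (n : ℝ) * (1 - φ n ρ) ∂ν := by
    funext n
    rw [htoReal n, integral_const_mul, integral_sub (integrable_const 1) (hφint n),
      integral_const]
    simp
  rw [hstep]
  -- dominated convergence
  have hinvint : ∀ k, Integrable (fun ρ : Fin K → ℝ => (ρ k)⁻¹) ν := by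
    intro k
    have hmeas : AEStronglyMeasurable (fun ρ : Fin K → ℝ => (ρ k)⁻¹) (μ.map X) :=
      ((measurable_pi_apply k).inv).aestronglyMeasurable
    rw [hν_def, integrable_map_measure hmeas hXmeas.aemeasurable]
    exact h1Rint k
  have hbnd_int : Integrable (fun ρ : Fin K → ℝ => ∑ k, (2 / (m k : ℝ)) * ((m k : ℝ) * L k / b k) * (ρ k)⁻¹) ν := by
    apply integrable_finset_sum
    intro k _
    exact (hinvint k).const_mul _
  have hev_ratio : ∀ᶠ n : ℕ in atTop, ∀ k, (n : ℝ) / a n k ≤ 2 / (m k : ℝ) := by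
    rw [eventually_all]
    intro k
    have hmpos : (0:ℝ) < (m k : ℝ) := Nat.cast_pos.mpr (hm k)
    have h2 : (1:ℝ) / (m k : ℝ) < 2 / (m k : ℝ) := by
      rw [div_lt_div_iff₀ hmpos hmpos]
      nlinarith
    exact ((hratio k).eventually_lt_const h2).mono fun n hn => hn.le
  have h_bound : ∀ᶠ n : ℕ in atTop, ∀ᵐ ρ ∂ν, ‖(n : ℝ) * (1 - φ n ρ)‖
      ≤ ∑ k, (2 / (m k : ℝ)) * ((m k : ℝ) * L k / b k) * (ρ k)⁻¹ := by
    filter_upwards [hev_ratio] with n hn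
    filter_upwards [hνpos] with ρ hρ
    have hF0 : 0 ≤ 1 - φ n ρ := by
      have := hφ1 n ρ hρ
      linarith
    rw [Real.norm_eq_abs, abs_of_nonneg (mul_nonneg (Nat.cast_nonneg n) hF0)]
    have hub : ∀ k, 0 ≤ 1 / (a n k * b k * ρ k) * L k := by
      intro k
      have h1 : (0:ℝ) < a n k * b k * ρ k := by
        have := ha n k; have := hbpos k; have := hρ k; positivity
      exact mul_nonneg (le_of_lt (one_div_pos.mpr h1)) (hL0 k)
    calc (n : ℝ) * (1 - φ n ρ)
        ≤ (n : ℝ) * ∑ k, (1 - max 0 (1 - 1 / (a n k * b k * ρ k) * L k) ^ m k) := by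
          apply mul_le_mul_of_nonneg_left _ (Nat.cast_nonneg n)
          exact one_sub_prod_le Finset.univ _
            (fun k _ => pow_nonneg (le_max_left _ _) _)
            (fun k _ => pow_le_one₀ (le_max_left _ _)
              (max_le zero_le_one (by linarith [hub k])))
      _ = ∑ k, (n : ℝ) * (1 - max 0 (1 - 1 / (a n k * b k * ρ k) * L k) ^ m k) := by
          rw [Finset.mul_sum]
      _ ≤ ∑ k, (2 / (m k : ℝ)) * ((m k : ℝ) * L k / b k) * (ρ k)⁻¹ := by
          apply Finset.sum_le_sum
          intro k _
          have h1 : (0:ℝ) < a n k * b k * ρ k := by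
            have := ha n k; have := hbpos k; have := hρ k; positivity
          have hane : a n k ≠ 0 := (ha n k).ne'
          have hbne : b k ≠ 0 := (hbpos k).ne'
          have hρne : ρ k ≠ 0 := (hρ k).ne'
          have e0 : (1 : ℝ) - max 0 (1 - 1 / (a n k * b k * ρ k) * L k) ^ m k
              ≤ (m k : ℝ) * (1 / (a n k * b k * ρ k) * L k) :=
            one_sub_maxpow_le (hub k) (hm k)
          have e1 : (n : ℝ) * (1 - max 0 (1 - 1 / (a n k * b k * ρ k) * L k) ^ m k)
              ≤ (n : ℝ) * ((m k : ℝ) * (1 / (a n k * b k * ρ k) * L k)) :=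
            mul_le_mul_of_nonneg_left e0 (Nat.cast_nonneg n)
          have e2 : (n : ℝ) * ((m k : ℝ) * (1 / (a n k * b k * ρ k) * L k))
              = ((n : ℝ) / a n k) * ((m k : ℝ) * L k / (b k * ρ k)) := by
            ring
          have e3 : ((n : ℝ) / a n k) * ((m k : ℝ) * L k / (b k * ρ k))
              ≤ (2 / (m k : ℝ)) * ((m k : ℝ) * L k / (b k * ρ k)) := by
            apply mul_le_mul_of_nonneg_right (hn k)
            exact div_nonneg (mul_nonneg (Nat.cast_nonneg _) (hL0 k))
              (mul_nonneg (hbpos k).le (hρ k).le)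
          have e4 : (2 / (m k : ℝ)) * ((m k : ℝ) * L k / (b k * ρ k))
              = (2 / (m k : ℝ)) * ((m k : ℝ) * L k / b k) * (ρ k)⁻¹ := by
            rw [← div_div ((m k : ℝ) * L k) (b k) (ρ k), div_eq_mul_inv (((m k : ℝ) * L k) / b k), mul_assoc]
          linarith [e1, e2 ▸ e1, e3, e4 ▸ e3]
  have h_lim : ∀ᵐ ρ ∂ν, Tendsto (fun n : ℕ => (n : ℝ) * (1 - φ n ρ)) atTop
      (𝓝 (∑ k, (L k / b k) * (ρ k)⁻¹)) := by
    filter_upwards [hνpos] with ρ hρ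
    apply lim_prod Finset.univ
      (fun n k => max 0 (1 - 1 / (a n k * b k * ρ k) * L k) ^ m k)
      (fun k => (L k / b k) * (ρ k)⁻¹)
    intro k _
    have hnu : Tendsto (fun n : ℕ => (n : ℝ) * (1 / (a n k * b k * ρ k) * L k)) atTop
        (𝓝 ((1 / (m k : ℝ)) * (L k / (b k * ρ k)))) := by
      have h4 := (hratio k).mul_const (L k / (b k * ρ k))
      refine h4.congr fun n => ?_
      ring
    have h5 := lim_pow (m k) _ _ hnu
    have h6 : (m k : ℝ) * ((1 / (m k : ℝ)) * (L k / (b k * ρ k)))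
        = (L k / b k) * (ρ k)⁻¹ := by
      have hbk : b k ≠ 0 := (hbpos k).ne'
      have hρk : ρ k ≠ 0 := (hρ k).ne'
      field_simp [hmne k]
    rw [h6] at h5
    exact h5
  have hDCT := tendsto_integral_filter_of_dominated_convergence
    (fun ρ : Fin K → ℝ => ∑ k, (2 / (m k : ℝ)) * ((m k : ℝ) * L k / b k) * (ρ k)⁻¹)
    (Eventually.of_forall fun n : ℕ =>
      ((measurable_const.mul ((measurable_const.sub (hφmeas n)))).aestronglyMeasurable))
    h_bound hbnd_int h_lim
  have hgval : ∫ ρ, (∑ k, (L k / b k) * (ρ k)⁻¹) ∂ν = ∑ k, L k := by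
    rw [integral_finset_sum _ (fun k _ => (hinvint k).const_mul _)]
    refine Finset.sum_congr rfl fun k _ => ?_
    rw [integral_const_mul]
    have hI : ∫ ρ, (ρ k)⁻¹ ∂ν = b k := by
      rw [hν_def, integral_map (f := fun ρ : Fin K → ℝ => (ρ k)⁻¹) hXmeas.aemeasurable
        ((measurable_pi_apply k).inv).aestronglyMeasurable]
      rw [hb k]
      simp [one_div]
      rfl
    rw [hI]
    exact div_mul_cancel₀ _ (hbpos k).ne'
  rw [← hgval]
  exact hDCT
end

section
/- (Corollary: the clustered limiting stdf dominates the distortion stdf.) Let {1,…,K} be the union of disjoint sets D_1 and D_2. Let W = (W_1,…,W_K) be an integrable, almost surely positive random vector with E[W_k] = 1 for every k. For each k ∈ D_1, let ρ_k ∈ (0,1) and let S_k be a positive random variable with E[S_k^{−ρ_k}] = b_k < ∞, and assume (S_k)_{k∈D_1} is independent of W. Then for every x' = (x'_1,…,x'_K) with all x'_k ≥ 0, E[max_{1≤k≤K} x'_k W_k] ≤ E[max_{k∈D_1} x'_k W_k / (b_k S_k^{ρ_k})] + Σ_{k∈D_2} x'_k. (Equivalently, with ℓ_{1/R}(x') =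 E[max_k x'_k W_k], one has ℓ_{1/R}(x') ≤ ℓ_{G,ψ,ℓ,Q}(x) whenever x ∈ [0,∞)^d has the coordinates x'_k placed at one position of each cluster k and zeros elsewhere.) -/
open MeasureTheory ProbabilityTheory Filter
open scoped Topology

section Aux
variable {Ω : Type*} [MeasurableSpace Ω] {μ : Measure Ω}

lemma aux_measurable_ciSup {ι : Type*} [Fintype ι] [Nonempty ι]
    (f : ι → Ω → ℝ) (hf : ∀ i, Measurable (f i)) :
    Measurable fun ω => ⨆ i, f i ω := by
  have h : (fun ω => ⨆ i, f i ω)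
      = fun ω => Finset.univ.sup' Finset.univ_nonempty (fun i => f i ω) := by
    funext ω; rw [Finset.sup'_univ_eq_ciSup]
  rw [h]
  have h2 := Finset.measurable_sup' (s := (Finset.univ : Finset ι))
    Finset.univ_nonempty (f := f) (fun i _ => hf i)
  convert h2 using 1
  funext ω
  exact (Finset.sup'_apply _ _ _).symm

lemma aux_integrable_ciSup {ι : Type*} [Fintype ι] [Nonempty ι]
    (f : ι → Ω → ℝ) (hf : ∀ i, Measurable (f i)) (hint : ∀ i, Integrable (f i) μ) :
    Integrable (fun ω => ⨆ i, f i ω) μ := by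
  refine Integrable.mono' (g := fun ω => ∑ i, |f i ω|)
    (integrable_finset_sum _ fun i _ => (hint i).abs)
    ((aux_measurable_ciSup f hf).aestronglyMeasurable) ?_
  refine Filter.Eventually.of_forall fun ω => ?_
  rw [Real.norm_eq_abs]
  have h1 : (⨆ i, f i ω) = Finset.univ.sup' Finset.univ_nonempty fun i => f i ω :=
    (Finset.sup'_univ_eq_ciSup _).symm
  obtain ⟨i, -, hi⟩ := Finset.exists_mem_eq_sup' (Finset.univ_nonempty)
    (fun i => f i ω)
  rw [h1, hi]
  exact le_trans le_rfl
    (Finset.single_le_sum (fun j _ => abs_nonneg (f j ω)) (Finset.mem_univ i))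

lemma aux_div_eq (a c s r : ℝ) (hs : 0 < s) (hc : c ≠ 0) :
    a / c * s ^ (-r) = a / (c * s ^ r) := by
  rw [Real.rpow_neg hs.le]
  have hsr : s ^ r ≠ 0 := (Real.rpow_pos_of_pos hs r).ne'
  field_simp

end Aux

/-- (Corollary: the clustered limiting stdf dominates the distortion
stdf.)  For a unit-mean, a.s. positive, integrable random vector `W`, exponents
`ρ k ∈ (0,1)` and positive `S k` with `b k = E[S k ^ (-ρ k)] < ∞` for `k ∈ D1`, with
`(S k)_{k ∈ D1}` independent of `W`:
`E[max_k x k * W k] ≤ E[max_{k ∈ D1} x k * W k / (b k * S k ω ^ ρ k)] + ∑_{k ∈ D2} x k`. -/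
theorem stmt_13
    {Ω : Type*} [MeasurableSpace Ω] (μ : Measure Ω) [IsProbabilityMeasure μ]
    (K : ℕ)
    (D1 D2 : Finset (Fin K)) (hdisj : Disjoint D1 D2)
    (hcover : D1 ∪ D2 = Finset.univ)
    (W : Fin K → Ω → ℝ)
    (hWmeas : ∀ k, Measurable (W k))
    (hWint : ∀ k, Integrable (W k) μ)
    (hWpos : ∀ k, ∀ᵐ ω ∂μ, 0 < W k ω)
    (hWmean : ∀ k, ∫ ω, W k ω ∂μ = 1)
    (ρ : Fin K → ℝ) (hρ : ∀ k ∈ D1, ρ k ∈ Set.Ioo (0 : ℝ) 1)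
    (S : Fin K → Ω → ℝ)
    (hSmeas : ∀ k ∈ D1, Measurable (S k))
    (hSpos : ∀ k ∈ D1, ∀ᵐ ω ∂μ, 0 < S k ω)
    (hSint : ∀ k ∈ D1, Integrable (fun ω => S k ω ^ (-(ρ k))) μ)
    (b : Fin K → ℝ) (hb : ∀ k ∈ D1, b k = ∫ ω, S k ω ^ (-(ρ k)) ∂μ)
    (hindep : IndepFun (fun ω => fun k : {k : Fin K // k ∈ D1} => S k.1 ω)
      (fun ω k => W k ω) μ) :
    ∀ x : Fin K → ℝ, (∀ k, 0 ≤ x k) →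
      ∫ ω, (⨆ k, x k * W k ω) ∂μ ≤
        (∫ ω, (⨆ k ∈ D1, x k * W k ω / (b k * S k ω ^ ρ k)) ∂μ) +
          ∑ k ∈ D2, x k := by
  classical
  intro x hx
  rcases isEmpty_or_nonempty (Fin K) with hK | hK
  · have hD2 : D2 = ∅ := Finset.eq_empty_of_forall_notMem fun k _ => hK.elim k
    simp [Real.iSup_of_isEmpty, hD2]
  -- notation
  set T : Ω → {k : Fin K // k ∈ D1} → ℝ := fun ω => fun k => S k.1 ω with hTdef
  set U : Ω → Fin K → ℝ := fun ω k => W k ω with hUdef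
  have hT : Measurable T := measurable_pi_lambda _ fun k => hSmeas k.1 k.2
  have hU : Measurable U := measurable_pi_lambda _ fun k => hWmeas k
  have hTU : Measurable fun ω => (T ω, U ω) := hT.prodMk hU
  -- positivity facts
  have hWpos' : ∀ᵐ ω ∂μ, ∀ k, 0 < W k ω := ae_all_iff.mpr hWpos
  have hSpos' : ∀ᵐ ω ∂μ, ∀ k, k ∈ D1 → 0 < S k ω := by
    rw [ae_all_iff]
    intro k
    by_cases hk : k ∈ D1
    · exact (hSpos k hk).mono fun ω h _ => h
    · exact Filter.Eventually.of_forall fun ω h => absurd h hk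
  have hbpos : ∀ k ∈ D1, 0 < b k := by
    intro k hk
    have hmeasf : Measurable fun ω => S k ω ^ (-ρ k) :=
      (hSmeas k hk).pow measurable_const
    have h1 : 0 ≤ᵐ[μ] fun ω => S k ω ^ (-ρ k) :=
      (hSpos k hk).mono fun ω h => (Real.rpow_pos_of_pos h _).le
    rw [hb k hk, integral_pos_iff_support_of_nonneg_ae h1 (hSint k hk)]
    have hms : MeasurableSet (Function.support fun ω => S k ω ^ (-ρ k)) :=
      hmeasf (measurableSet_singleton 0).compl
    have h2 : μ (Function.support fun ω => S k ω ^ (-ρ k))ᶜ = 0 := by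
      have h2' : ∀ᵐ ω ∂μ, (S k ω ^ (-ρ k)) ≠ 0 :=
        (hSpos k hk).mono fun ω h => (Real.rpow_pos_of_pos h _).ne'
      have h2'' := ae_iff.mp h2'
      simp only [ne_eq, not_not] at h2''
      rw [Function.compl_support]
      exact h2''
    have h3 := measure_add_measure_compl (μ := μ) hms
    rw [h2, measure_univ, add_zero] at h3
    rw [h3]; exact zero_lt_one
  -- independence of S k ^ (-ρ k) and W k
  have hindepk : ∀ k, ∀ hk : k ∈ D1,
      IndepFun (fun ω => S k ω ^ (-ρ k)) (W k) μ := by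
    intro k hk
    have h := hindep.comp
      (φ := fun s : {k : Fin K // k ∈ D1} → ℝ => (s ⟨k, hk⟩) ^ (-ρ k))
      (ψ := fun w : Fin K → ℝ => w k)
      (show Measurable fun s : {k : Fin K // k ∈ D1} → ℝ => (s ⟨k, hk⟩) ^ (-ρ k) from
        (measurable_pi_apply _).pow measurable_const)
      (show Measurable fun w : Fin K → ℝ => w k from measurable_pi_apply k)
    exact h
  have hprod_int : ∀ k, ∀ hk : k ∈ D1,
      Integrable (fun ω => S k ω ^ (-ρ k) * W k ω) μ :=
    fun k hk => (hindepk k hk).integrable_mul (hSint k hk) (hWint k)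
  -- the function F on the product space
  set F : ({k : Fin K // k ∈ D1} → ℝ) × (Fin K → ℝ) → ℝ := fun p =>
    ⨆ k : Fin K, if h : k ∈ D1 then x k * p.2 k / (b k * (p.1 ⟨k, h⟩) ^ ρ k) else 0
    with hFdef
  have hFmeas : Measurable F := by
    apply aux_measurable_ciSup
    intro k
    by_cases h : k ∈ D1
    · simp only [dif_pos h]
      exact (measurable_const.mul ((measurable_pi_apply k).comp measurable_snd)).div
        (measurable_const.mul
          (((measurable_pi_apply (⟨k, h⟩ : {k : Fin K // k ∈ D1})).comp
            measurable_fst).pow measurable_const))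
    · simp only [dif_neg h]; exact measurable_const
  -- pointwise nonnegativity and domination of F ∘ (T, U)
  have hcomp_nonneg : ∀ ω, (∀ k, 0 < W k ω) → (∀ k ∈ D1, 0 < S k ω) →
      0 ≤ F (T ω, U ω) := by
    intro ω hW hS
    obtain ⟨k0⟩ := hK
    refine le_trans ?_ (le_ciSup (Set.Finite.bddAbove (Set.finite_range _)) k0)
    by_cases h : k0 ∈ D1
    · simp only [dif_pos h]
      exact div_nonneg (mul_nonneg (hx k0) (hW k0).le)
        (mul_nonneg (hbpos k0 h).le (Real.rpow_nonneg (hS k0 h).le _))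
    · simp only [dif_neg h]; exact le_refl 0
  have hcomp_le : ∀ ω, (∀ k, 0 < W k ω) → (∀ k ∈ D1, 0 < S k ω) →
      F (T ω, U ω) ≤ ∑ k ∈ D1, x k * (S k ω ^ (-ρ k) * W k ω) / b k := by
    intro ω hW hS
    refine ciSup_le fun k => ?_
    by_cases h : k ∈ D1
    · simp only [dif_pos h]
      have heq : x k * W k ω / (b k * S k ω ^ ρ k)
          = x k * (S k ω ^ (-ρ k) * W k ω) / b k := by
        rw [← aux_div_eq _ _ _ _ (hS k h) (hbpos k h).ne']
        ring
      rw [heq]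
      refine Finset.single_le_sum (f := fun j => x j * (S j ω ^ (-ρ j) * W j ω) / b j)
        (fun j hj => ?_) h
      exact div_nonneg (mul_nonneg (hx j)
        (mul_nonneg (Real.rpow_nonneg (hS j hj).le _) (hW j).le)) (hbpos j hj).le
    · simp only [dif_neg h]
      exact Finset.sum_nonneg fun j hj => div_nonneg (mul_nonneg (hx j)
        (mul_nonneg (Real.rpow_nonneg (hS j hj).le _) (hW j).le)) (hbpos j hj).le
  have hFint : Integrable (fun ω => F (T ω, U ω)) μ := by
    refine Integrable.mono'
      (g := fun ω => ∑ k ∈ D1, x k * (S k ω ^ (-ρ k) * W k ω) / b k)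
      (integrable_finset_sum _ fun k hk => ((hprod_int k hk).const_mul (x k)).div_const (b k))
      ((hFmeas.comp hTU).aestronglyMeasurable) ?_
    filter_upwards [hWpos', hSpos'] with ω hW hS
    rw [Real.norm_eq_abs, abs_of_nonneg (hcomp_nonneg ω hW hS)]
    exact hcomp_le ω hW hS
  -- generic nonnegativity of F
  have hFnn : ∀ (p : ({k : Fin K // k ∈ D1} → ℝ) × (Fin K → ℝ)),
      (∀ k, 0 ≤ p.2 k) → (∀ j, 0 < p.1 j) → 0 ≤ F p := by
    intro p hw hs
    obtain ⟨k0⟩ := hK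
    refine le_trans ?_ (le_ciSup (Set.Finite.bddAbove (Set.finite_range _)) k0)
    by_cases h : k0 ∈ D1
    · simp only [dif_pos h]
      exact div_nonneg (mul_nonneg (hx k0) (hw k0))
        (mul_nonneg (hbpos k0 h).le (Real.rpow_nonneg (hs ⟨k0, h⟩).le _))
    · simp only [dif_neg h]; exact le_refl 0
  -- push-forward facts
  have hmap : μ.map (fun ω => (T ω, U ω)) = (μ.map T).prod (μ.map U) :=
    (indepFun_iff_map_prod_eq_prod_map_map hT.aemeasurable hU.aemeasurable).mp hindep
  have hFint_prod : Integrable F ((μ.map T).prod (μ.map U)) := by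
    rw [← hmap]
    rw [integrable_map_measure hFmeas.aestronglyMeasurable hTU.aemeasurable]
    exact hFint
  have hposU : ∀ᵐ w ∂(μ.map U), ∀ k, 0 < w k := by
    have hmA : MeasurableSet {w : Fin K → ℝ | ∀ k, 0 < w k} := by
      rw [Set.setOf_forall]
      exact MeasurableSet.iInter fun k =>
        measurableSet_lt measurable_const (measurable_pi_apply k)
    rw [ae_map_iff hU.aemeasurable hmA]
    exact hWpos'
  have hposT : ∀ᵐ s ∂(μ.map T), ∀ j : {k : Fin K // k ∈ D1}, 0 < s j := by
    have hmA : MeasurableSet {s : {k : Fin K // k ∈ D1} → ℝ | ∀ j, 0 < s j} := by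
      rw [Set.setOf_forall]
      exact MeasurableSet.iInter fun j =>
        measurableSet_lt measurable_const (measurable_pi_apply j)
    rw [ae_map_iff hT.aemeasurable hmA]
    exact hSpos'.mono fun ω h j => h j.1 j.2
  -- the integrand on Ω restricted to D1
  set g : Fin K → Ω → ℝ := fun k ω => if k ∈ D1 then x k * W k ω else 0 with hgdef
  have hgmeas : ∀ k, Measurable (g k) := by
    intro k
    by_cases h : k ∈ D1
    · simpa only [hgdef, if_pos h] using (hWmeas k).const_mul (x k)
    · simpa only [hgdef, if_neg h] using measurable_const
  have hgint : ∀ k, Integrable (g k) μ := by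
    intro k
    by_cases h : k ∈ D1
    · simpa only [hgdef, if_pos h] using (hWint k).const_mul (x k)
    · simpa only [hgdef, if_neg h] using integrable_const (0 : ℝ)
  have hGint : Integrable (fun ω => ⨆ k, g k ω) μ :=
    aux_integrable_ciSup g hgmeas hgint
  -- Step 1
  have step1 : ∫ ω, (⨆ k, x k * W k ω) ∂μ ≤
      (∫ ω, (⨆ k, g k ω) ∂μ) + ∑ k ∈ D2, x k := by
    have hLint : Integrable (fun ω => ⨆ k, x k * W k ω) μ :=
      aux_integrable_ciSup _ (fun k => (hWmeas k).const_mul (x k))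
        (fun k => (hWint k).const_mul (x k))
    have hSumint : Integrable (fun ω => ∑ k ∈ D2, x k * W k ω) μ :=
      integrable_finset_sum _ fun k _ => (hWint k).const_mul (x k)
    have hae : ∀ᵐ ω ∂μ, (⨆ k, x k * W k ω) ≤
        (⨆ k, g k ω) + ∑ k ∈ D2, x k * W k ω := by
      filter_upwards [hWpos'] with ω hW
      have hG0 : 0 ≤ ⨆ k, g k ω := by
        obtain ⟨k0⟩ := hK
        refine le_trans ?_ (le_ciSup (Set.Finite.bddAbove (Set.finite_range _)) k0)
        by_cases h : k0 ∈ D1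
        · simp only [hgdef, if_pos h]
          exact mul_nonneg (hx k0) (hW k0).le
        · simp only [hgdef, if_neg h]; exact le_refl 0
      refine ciSup_le fun k => ?_
      have hk' : k ∈ D1 ∪ D2 := hcover ▸ Finset.mem_univ k
      rcases Finset.mem_union.mp hk' with hk | hk
      · refine le_trans ?_ (le_add_of_nonneg_right
          (Finset.sum_nonneg fun j _ => mul_nonneg (hx j) (hW j).le))
        refine le_trans ?_ (le_ciSup (Set.Finite.bddAbove (Set.finite_range _)) k)
        simp only [hgdef, if_pos hk]
        exact le_rfl
      · refine le_trans ?_ (le_add_of_nonneg_left hG0)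
        exact Finset.single_le_sum
          (f := fun j => x j * W j ω)
          (fun j _ => mul_nonneg (hx j) (hW j).le) hk
    calc ∫ ω, (⨆ k, x k * W k ω) ∂μ
        ≤ ∫ ω, ((⨆ k, g k ω) + ∑ k ∈ D2, x k * W k ω) ∂μ :=
          integral_mono_ae hLint (hGint.add hSumint) hae
      _ = (∫ ω, (⨆ k, g k ω) ∂μ) + ∑ k ∈ D2, x k := by
          rw [integral_add hGint hSumint, integral_finset_sum _
            (fun k _ => (hWint k).const_mul (x k))]
          congr 1
          refine Finset.sum_congr rfl fun k _ => ?_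
          rw [integral_const_mul, hWmean k, mul_one]
  -- Step 2
  set G' : (Fin K → ℝ) → ℝ := fun w => ⨆ k, if k ∈ D1 then x k * w k else 0
    with hG'def
  have hG'meas : Measurable G' := by
    apply aux_measurable_ciSup
    intro k
    by_cases h : k ∈ D1
    · simp only [if_pos h]
      exact measurable_const.mul (measurable_pi_apply k)
    · simp only [if_neg h]; exact measurable_const
  have hG'int : Integrable G' (μ.map U) := by
    rw [integrable_map_measure hG'meas.aestronglyMeasurable hU.aemeasurable]
    exact hGint
  have hbint : ∀ k, ∀ hk : k ∈ D1,
      ∫ s, ((s ⟨k, hk⟩ : ℝ) ^ (-ρ k)) ∂(μ.map T) = b k := by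
    intro k hk
    rw [integral_map hT.aemeasurable
      (((measurable_pi_apply _).pow measurable_const).aestronglyMeasurable)]
    exact (hb k hk).symm
  have hcompint : ∀ k, ∀ hk : k ∈ D1,
      Integrable (fun s : {k : Fin K // k ∈ D1} → ℝ => (s ⟨k, hk⟩) ^ (-ρ k))
        (μ.map T) := by
    intro k hk
    rw [integrable_map_measure
      (((measurable_pi_apply _).pow measurable_const).aestronglyMeasurable)
      hT.aemeasurable]
    exact hSint k hk
  have step2 : ∫ ω, (⨆ k, g k ω) ∂μ ≤ ∫ ω, F (T ω, U ω) ∂μ := by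
    have hae2 : ∀ᵐ w ∂(μ.map U), G' w ≤ ∫ s, F (s, w) ∂(μ.map T) := by
      filter_upwards [hposU, hFint_prod.prod_left_ae] with w hw hsec
      refine ciSup_le fun k => ?_
      by_cases hk : k ∈ D1
      · rw [if_pos hk]
        have key : ∫ s, (x k * w k / b k) * ((s ⟨k, hk⟩ : ℝ) ^ (-ρ k)) ∂(μ.map T)
            = x k * w k := by
          rw [integral_const_mul, hbint k hk, div_mul_cancel₀ _ (hbpos k hk).ne']
        rw [← key]
        refine integral_mono_ae ((hcompint k hk).const_mul _) hsec ?_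
        filter_upwards [hposT] with s hs
        have heq : (x k * w k / b k) * ((s ⟨k, hk⟩ : ℝ) ^ (-ρ k))
            = x k * w k / (b k * (s ⟨k, hk⟩ : ℝ) ^ ρ k) :=
          aux_div_eq _ _ _ _ (hs ⟨k, hk⟩) (hbpos k hk).ne'
        rw [heq]
        refine le_trans ?_ (le_ciSup (Set.Finite.bddAbove (Set.finite_range _)) k)
        rw [dif_pos hk]
      · rw [if_neg hk]
        refine integral_nonneg_of_ae ?_
        filter_upwards [hposT] with s hs
        exact hFnn (s, w) (fun j => (hw j).le) hs
    calc ∫ ω, (⨆ k, g k ω) ∂μ = ∫ w, G' w ∂(μ.map U) := by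
          rw [integral_map hU.aemeasurable hG'meas.aestronglyMeasurable]
      _ ≤ ∫ w, (∫ s, F (s, w) ∂(μ.map T)) ∂(μ.map U) :=
          integral_mono_ae hG'int hFint_prod.integral_prod_right hae2
      _ = ∫ p, F p ∂((μ.map T).prod (μ.map U)) :=
          (integral_prod_symm F hFint_prod).symm
      _ = ∫ ω, F (T ω, U ω) ∂μ := by
          rw [← hmap, integral_map hTU.aemeasurable hFmeas.aestronglyMeasurable]
  -- conclusion
  have hgoal : (∫ ω, (⨆ k ∈ D1, x k * W k ω / (b k * S k ω ^ ρ k)) ∂μ)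
      = ∫ ω, F (T ω, U ω) ∂μ := by
    refine integral_congr_ae (Filter.Eventually.of_forall fun ω => ?_)
    refine iSup_congr fun k => ?_
    by_cases h : k ∈ D1
    · rw [ciSup_pos h]
      simp only [dif_pos h]
      rfl
    · simp [h]
  rw [hgoal]
  exact le_trans step1 (add_le_add step2 le_rfl)
end

section
/- Let K ≥ 1, let W = (W_1,…,W_K) be an integrable, almost surely positive random vector, let ρ_1,…,ρ_K > 0, and let S_1,…,S_K be positive random variables, with (S_1,…,S_K) independent of W and b_k := E[S_k^{−ρ_k}] < ∞ for each k. Then for every x ∈ [0,∞)^K, E[max_{1≤k≤K} x_k W_k / (b_k S_k^{ρ_k})] ≥ E[max_{1≤k≤K} x_k W_k]. -/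
open MeasureTheory ProbabilityTheory Filter
open scoped Topology ENNReal

lemma aux_measurable_rpow_const (c : ℝ) : Measurable fun x : ℝ => x ^ c := by
  have heq : (fun x : ℝ => x ^ c) = fun x =>
      if x = 0 then (if c = 0 then 1 else 0)
      else Real.exp (Real.log x * c) * (if x < 0 then Real.cos (c * Real.pi) else 1) := by
    funext x
    rcases lt_trichotomy x 0 with h | h | h
    · rw [if_neg h.ne, if_pos h, Real.rpow_def_of_neg h]
    · subst h
      rw [if_pos rfl]
      split_ifs with hc
      · subst hc; exact Real.rpow_zero 0
      · exact Real.zero_rpow hc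
    · rw [if_neg h.ne', if_neg (not_lt.mpr h.le), mul_one, Real.rpow_def_of_pos h]
  rw [heq]
  have h0 : MeasurableSet {x : ℝ | x = 0} := measurableSet_eq
  have hlt : MeasurableSet {x : ℝ | x < 0} := measurableSet_lt measurable_id measurable_const
  exact Measurable.ite h0 measurable_const
    ((Real.measurable_exp.comp (Real.measurable_log.mul_const c)).mul
      (Measurable.ite hlt measurable_const measurable_const))

lemma aux_ofReal_iSup {ι : Type*} [Finite ι] [Nonempty ι] (f : ι → ℝ) :
    ENNReal.ofReal (⨆ i, f i) = ⨆ i, ENNReal.ofReal (f i) := by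
  obtain ⟨i, hi⟩ := Finite.exists_max f
  have h1 : (⨆ j, f j) = f i :=
    le_antisymm (ciSup_le hi) (le_ciSup (Finite.bddAbove_range f) i)
  refine le_antisymm ?_ (iSup_le fun j => ?_)
  · rw [h1]; exact le_iSup (fun j => ENNReal.ofReal (f j)) i
  · rw [h1]; exact ENNReal.ofReal_le_ofReal (hi j)

/-- For an integrable, a.s. positive random vector `W`, exponents
`ρ k > 0` and positive random variables `S k` with `(S_1,…,S_K)` independent of `W` and
`b k = E[S k ^ (-ρ k)] < ∞`: for every coordinatewise nonnegative `x`,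
`E[max_k x k * W k / (b k * S k ^ ρ k)] ≥ E[max_k x k * W k]`
(expectations as Lebesgue integrals, possibly infinite). -/
theorem stmt_14
    {Ω : Type*} [MeasurableSpace Ω] (μ : Measure Ω) [IsProbabilityMeasure μ]
    (K : ℕ) (hK : 1 ≤ K)
    (W : Fin K → Ω → ℝ)
    (hWmeas : ∀ k, Measurable (W k))
    (hWint : ∀ k, Integrable (W k) μ)
    (hWpos : ∀ k, ∀ᵐ ω ∂μ, 0 < W k ω)
    (ρ : Fin K → ℝ) (hρ : ∀ k, 0 < ρ k)
    (S : Fin K → Ω → ℝ)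
    (hSmeas : ∀ k, Measurable (S k))
    (hSpos : ∀ k, ∀ᵐ ω ∂μ, 0 < S k ω)
    (hindep : IndepFun (fun ω k => S k ω) (fun ω k => W k ω) μ)
    (hSint : ∀ k, Integrable (fun ω => S k ω ^ (-(ρ k))) μ)
    (b : Fin K → ℝ) (hb : ∀ k, b k = ∫ ω, S k ω ^ (-(ρ k)) ∂μ) :
    ∀ x : Fin K → ℝ, (∀ k, 0 ≤ x k) →
      ∫⁻ ω, ENNReal.ofReal (⨆ k, x k * W k ω) ∂μ ≤
        ∫⁻ ω, ENNReal.ofReal (⨆ k, x k * W k ω / (b k * S k ω ^ ρ k)) ∂μ := by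
  intro x hx
  haveI : Nonempty (Fin K) := ⟨⟨0, hK⟩⟩
  set Sv : Ω → (Fin K → ℝ) := fun ω k => S k ω with hSv_def
  set Wv : Ω → (Fin K → ℝ) := fun ω k => W k ω with hWv_def
  have hSv : Measurable Sv := measurable_pi_lambda _ fun k => hSmeas k
  have hWv : Measurable Wv := measurable_pi_lambda _ fun k => hWmeas k
  set νS := Measure.map Sv μ with hνS_def
  set νW := Measure.map Wv μ with hνW_def
  haveI : IsProbabilityMeasure νS := Measure.isProbabilityMeasure_map hSv.aemeasurable
  haveI : IsProbabilityMeasure νW := Measure.isProbabilityMeasure_map hWv.aemeasurable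
  have hmap : Measure.map (fun ω => (Sv ω, Wv ω)) μ = νS.prod νW :=
    (indepFun_iff_map_prod_eq_prod_map_map hSv.aemeasurable hWv.aemeasurable).mp hindep
  -- positivity of b
  have hbpos : ∀ k, 0 < b k := by
    intro k
    rw [hb k]
    have h0 : 0 ≤ᵐ[μ] fun ω => S k ω ^ (-(ρ k)) :=
      (hSpos k).mono fun ω hω => (Real.rpow_pos_of_pos hω _).le
    rw [integral_pos_iff_support_of_nonneg_ae h0 (hSint k), pos_iff_ne_zero]
    intro h
    have hf0 : ∀ᵐ ω ∂μ, S k ω ^ (-(ρ k)) = 0 := by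
      rw [ae_iff]
      simpa [Function.support] using h
    obtain ⟨ω, h1, h2⟩ := ((hSpos k).and hf0).exists
    exact absurd h2 (Real.rpow_pos_of_pos h1 _).ne'
  -- measurability of the product-space integrand
  set F : (Fin K → ℝ) × (Fin K → ℝ) → ℝ≥0∞ :=
    fun p => ⨆ k, ENNReal.ofReal (x k * p.2 k / (b k * p.1 k ^ ρ k)) with hF_def
  have hFmeas : Measurable F := by
    apply Measurable.iSup
    intro k
    apply ENNReal.measurable_ofReal.comp
    exact (measurable_const.mul ((measurable_pi_apply k).comp measurable_snd)).div
      (measurable_const.mul ((aux_measurable_rpow_const (ρ k)).comp ((measurable_pi_apply k).comp measurable_fst)))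
  -- key pointwise (in w) inequality
  have key : ∀ w : Fin K → ℝ, (∀ k, 0 < w k) →
      (⨆ k, ENNReal.ofReal (x k * w k)) ≤ ∫⁻ s, F (s, w) ∂νS := by
    intro w hw
    refine iSup_le fun k => ?_
    have h1 : ∫⁻ s, ENNReal.ofReal (x k * w k / (b k * s k ^ ρ k)) ∂νS ≤
        ∫⁻ s, F (s, w) ∂νS :=
      lintegral_mono fun s => le_iSup (fun j => ENNReal.ofReal (x j * w j / (b j * s j ^ ρ j))) k
    refine le_trans (le_of_eq ?_) h1
    have hmeas1 : Measurable fun s : Fin K → ℝ =>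
        ENNReal.ofReal (x k * w k / (b k * s k ^ ρ k)) :=
      ENNReal.measurable_ofReal.comp ((measurable_const.div
        (measurable_const.mul ((aux_measurable_rpow_const (ρ k)).comp (measurable_pi_apply k)))))
    rw [hνS_def, lintegral_map hmeas1 hSv]
    have heq : (fun ω => ENNReal.ofReal (x k * w k / (b k * Sv ω k ^ ρ k))) =ᵐ[μ]
        fun ω => ENNReal.ofReal (x k * w k / b k) * ENNReal.ofReal (S k ω ^ (-(ρ k))) := by
      filter_upwards [hSpos k] with ω hω
      have hρpos : (0:ℝ) < S k ω ^ ρ k := Real.rpow_pos_of_pos hω _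
      have heq2 : x k * w k / (b k * S k ω ^ ρ k) = (x k * w k / b k) * S k ω ^ (-(ρ k)) := by
        rw [Real.rpow_neg hω.le]
        field_simp
      simp only [hSv_def]
      rw [heq2, ENNReal.ofReal_mul (div_nonneg (mul_nonneg (hx k) (hw k).le) (hbpos k).le)]
    rw [lintegral_congr_ae heq, lintegral_const_mul' _ _ ENNReal.ofReal_ne_top]
    have hnn : 0 ≤ᵐ[μ] fun ω => S k ω ^ (-(ρ k)) :=
      (hSpos k).mono fun ω hω => (Real.rpow_pos_of_pos hω _).le
    rw [← ofReal_integral_eq_lintegral_ofReal (hSint k) hnn, ← hb k,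
      ← ENNReal.ofReal_mul (div_nonneg (mul_nonneg (hx k) (hw k).le) (hbpos k).le), div_mul_cancel₀ _ (hbpos k).ne']
  -- a.e. positivity on νW
  have hWae : ∀ᵐ w ∂νW, ∀ k, 0 < w k := by
    have hset : MeasurableSet {w : Fin K → ℝ | ∀ k, 0 < w k} := by
      have : {w : Fin K → ℝ | ∀ k, 0 < w k} = ⋂ k, {w | 0 < w k} := by
        ext w; simp
      rw [this]
      exact MeasurableSet.iInter fun k => measurableSet_lt measurable_const (measurable_pi_apply k)
    rw [hνW_def, ae_map_iff hWv.aemeasurable hset]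
    exact ae_all_iff.mpr hWpos
  calc ∫⁻ ω, ENNReal.ofReal (⨆ k, x k * W k ω) ∂μ
      = ∫⁻ ω, ⨆ k, ENNReal.ofReal (x k * W k ω) ∂μ :=
        lintegral_congr fun ω => aux_ofReal_iSup _
    _ = ∫⁻ w, ⨆ k, ENNReal.ofReal (x k * w k) ∂νW := by
        rw [hνW_def, lintegral_map (Measurable.iSup fun k =>
          ((measurable_pi_apply k).const_mul (x k)).ennreal_ofReal) hWv]
    _ ≤ ∫⁻ w, ∫⁻ s, F (s, w) ∂νS ∂νW := by
        refine lintegral_mono_ae ?_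
        filter_upwards [hWae] with w hw using key w hw
    _ = ∫⁻ p, F p ∂(νS.prod νW) := (lintegral_prod_symm F hFmeas.aemeasurable).symm
    _ = ∫⁻ ω, F (Sv ω, Wv ω) ∂μ := by
        rw [← hmap, lintegral_map hFmeas (hSv.prodMk hWv)]
    _ = ∫⁻ ω, ENNReal.ofReal (⨆ k, x k * W k ω / (b k * S k ω ^ ρ k)) ∂μ :=
        lintegral_congr fun ω => (aux_ofReal_iSup _).symm
end

section
/- (Marginal stdf identity for a single cluster.) Let d ≥ 2, let ℓ be a d-variate stable tail dependence function in d-norm form, and let S = (S_1,…,S_d) have the ℓ-simplex distribution. Let ρ ∈ (0,1) and b = E[Z^{−ρ}] where Z is Beta(1, d−1), i.e. P(Z > s) = (1−s)^{d−1} on [0,1]. Then for every x = (x_1,…,x_d) ∈ [0,∞)^d, E[max_{1≤i≤d} x_i / (b S_i^{ρ})] = (ℓ(x_1^{1/ρ},…,x_d^{1/ρ}))^{ρ}. -/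
open MeasureTheory ProbabilityTheory Filter
open scoped Topology

open scoped ENNReal
open Set

section Aux

variable {d : ℕ} [Nonempty (Fin d)]

lemma iSup_fin_eq_sup' (f : Fin d → ℝ) :
    (⨆ i, f i) = Finset.univ.sup' Finset.univ_nonempty f :=
  (Finset.sup'_univ_eq_ciSup f).symm

lemma iSup_fin_lt_iff {f : Fin d → ℝ} {a : ℝ} : (⨆ i, f i) < a ↔ ∀ i, f i < a := by
  rw [iSup_fin_eq_sup', Finset.sup'_lt_iff]
  simp

lemma iSup_fin_rpow {f : Fin d → ℝ} (hf : ∀ i, 0 ≤ f i) {ρ : ℝ} (hρ : 0 ≤ ρ) :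
    (⨆ i, f i) ^ ρ = ⨆ i, f i ^ ρ := by
  rw [iSup_fin_eq_sup', iSup_fin_eq_sup']
  obtain ⟨j, -, hj⟩ := Finset.exists_mem_eq_sup' (Finset.univ_nonempty (α := Fin d)) f
  obtain ⟨k, -, hk⟩ := Finset.exists_mem_eq_sup' (Finset.univ_nonempty (α := Fin d))
    (fun i => f i ^ ρ)
  rw [hj, hk]
  apply le_antisymm
  · rw [← hk]; exact Finset.le_sup' (fun i => f i ^ ρ) (Finset.mem_univ j)
  · exact Real.rpow_le_rpow (hf k) (hj ▸ Finset.le_sup' f (Finset.mem_univ k)) hρ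

lemma ftc_beta (n : ℕ) {a : ℝ} (ha : 0 ≤ a) :
    ∫ s in Set.Ioo (0:ℝ) a, (((n:ℝ)+1) * (1-s)^n) = 1 - (1-a)^(n+1) := by
  rw [← integral_Ioc_eq_integral_Ioo, ← intervalIntegral.integral_of_le ha,
    intervalIntegral.integral_const_mul, intervalIntegral.integral_comp_sub_left (fun u => u ^ n) 1]
  simp only [sub_zero, integral_pow, one_pow]
  field_simp

end Aux

set_option maxHeartbeats 1600000 in
/-- (Marginal stdf identity for a single cluster.) If `S` has the
`ℓ`-simplex distribution, `ρ ∈ (0,1)` and `b = E[Z^(-ρ)]` for `Z` Beta(1, d-1), then for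
every coordinatewise nonnegative `x`,
`E[max_i x i / (b * S i ^ ρ)] = (ℓ (x^(1/ρ)))^ρ`. -/
theorem stmt_16
    {Ω : Type*} [MeasurableSpace Ω] (μ : Measure Ω) [IsProbabilityMeasure μ]
    (d : ℕ) (hd : 2 ≤ d)
    (ℓ : (Fin d → ℝ) → ℝ) (hℓ : IsDNormStdf ℓ)
    (S : Fin d → Ω → ℝ)
    (hSmeas : ∀ i, Measurable (S i))
    (hSsurv : ∀ s : Fin d → ℝ, (∀ i, 0 ≤ s i) →
      (μ {ω | ∀ i, s i < S i ω}).toReal = max 0 (1 - ℓ s) ^ (d - 1))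
    (ρ : ℝ) (hρ : ρ ∈ Set.Ioo (0 : ℝ) 1)
    (b : ℝ)
    (hb : b = ∫ s in Set.Ioo (0 : ℝ) 1, ((d : ℝ) - 1) * (1 - s) ^ (d - 2) * s ^ (-ρ)) :
    ∀ x : Fin d → ℝ, (∀ i, 0 ≤ x i) →
      ∫ ω, (⨆ i, x i / (b * S i ω ^ ρ)) ∂μ = ℓ (fun i => x i ^ (1 / ρ)) ^ ρ := by
  haveI : NeZero d := ⟨by omega⟩
  obtain ⟨Ω', mΩ', μ', W, hμ', hWm, hWint, hWpos, hWmean, hℓeq⟩ := hℓ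
  have hρ0 : (0:ℝ) < ρ := hρ.1
  have hρ1 : ρ < 1 := hρ.2
  have hW_ae : ∀ᵐ ω ∂μ', ∀ i, 0 < W i ω := ae_all_iff.mpr hWpos
  -- measurability and integrability of suprema
  have hsupmeas : ∀ z : Fin d → ℝ, Measurable (fun ω => ⨆ i, z i * W i ω) := by
    intro z
    exact Measurable.iSup (fun i => (hWm i).const_mul (z i))
  have hsupint : ∀ z : Fin d → ℝ, (∀ i, 0 ≤ z i) →
      Integrable (fun ω => ⨆ i, z i * W i ω) μ' := by
    intro z hz
    have hbound : Integrable (fun ω => ∑ i, z i * W i ω) μ' :=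
      integrable_finset_sum _ (fun i _ => (hWint i).const_mul (z i))
    apply Integrable.mono' hbound ((hsupmeas z).aestronglyMeasurable)
    filter_upwards [hW_ae] with ω hω
    obtain ⟨k, -, hk⟩ := Finset.exists_mem_eq_sup' (Finset.univ_nonempty (α := Fin d))
      (fun i => z i * W i ω)
    have hsup_eq : (⨆ i, z i * W i ω) = z k * W k ω := by
      rw [iSup_fin_eq_sup']; exact hk
    rw [Real.norm_eq_abs, hsup_eq, abs_of_nonneg (mul_nonneg (hz k) (hω k).le)]
    exact Finset.single_le_sum (fun i _ => mul_nonneg (hz i) (hω i).le) (Finset.mem_univ k)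
  have hℓ_nonneg : ∀ z : Fin d → ℝ, (∀ i, 0 ≤ z i) → 0 ≤ ℓ z := by
    intro z hz
    rw [hℓeq]
    apply integral_nonneg_of_ae
    filter_upwards [hW_ae] with ω hω
    have i0 : Fin d := Classical.arbitrary _
    exact le_trans (mul_nonneg (hz i0) (hω i0).le)
      (le_ciSup (f := fun i => z i * W i ω) (Set.Finite.bddAbove (Set.finite_range _)) i0)
  have hℓ_ge : ∀ z : Fin d → ℝ, (∀ i, 0 ≤ z i) → ∀ j, z j ≤ ℓ z := by
    intro z hz j
    rw [hℓeq]
    have h1 : z j = ∫ ω, z j * W j ω ∂μ' := by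
      rw [integral_const_mul, hWmean j, mul_one]
    rw [h1]
    apply integral_mono_ae ((hWint j).const_mul _) (hsupint z hz)
    filter_upwards with ω
    exact le_ciSup (f := fun i => z i * W i ω) (Set.Finite.bddAbove (Set.finite_range _)) j
  have hℓ_hom : ∀ z : Fin d → ℝ, (u : ℝ) → 0 < u → ℓ (fun i => z i / u) = ℓ z / u := by
    intro z u hu
    rw [hℓeq, hℓeq]
    have h : ∀ ω, (⨆ i, z i / u * W i ω) = u⁻¹ * ⨆ i, z i * W i ω := by
      intro ω
      rw [Real.mul_iSup_of_nonneg (inv_nonneg.mpr hu.le)]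
      congr 1
      funext i
      ring
    simp_rw [h]
    rw [integral_const_mul, inv_mul_eq_div]
  have hℓ_zero : ℓ (fun _ => 0) = 0 := by
    rw [hℓeq]
    simp
  -- almost sure positivity of the S i
  have hT : ∀ᵐ ω ∂μ, ∀ i, 0 < S i ω := by
    have h0 := hSsurv (fun _ => 0) (fun _ => le_refl 0)
    rw [hℓ_zero] at h0
    simp only [sub_zero, max_eq_right zero_le_one, one_pow] at h0
    have hms : MeasurableSet {ω | ∀ i, 0 < S i ω} := by
      rw [Set.setOf_forall]
      exact MeasurableSet.iInter (fun i => measurableSet_lt measurable_const (hSmeas i))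
    have h1 : μ {ω | ∀ i, 0 < S i ω} = 1 := by
      rw [← ENNReal.ofReal_toReal (measure_ne_top μ _), h0]
      simp
    rw [ae_iff]
    have hcompl : {ω | ¬ ∀ i, 0 < S i ω} = {ω | ∀ i, 0 < S i ω}ᶜ := rfl
    rw [hcompl, prob_compl_eq_one_sub hms, h1, tsub_self]
  intro x hx
  set y : Fin d → ℝ := fun i => x i ^ (1/ρ) with hy_def
  have hy0 : ∀ i, 0 ≤ y i := fun i => Real.rpow_nonneg (hx i) _
  have hyx : ∀ i, y i ^ ρ = x i := by
    intro i
    show (x i ^ (1/ρ)) ^ ρ = x i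
    rw [← Real.rpow_mul (hx i), one_div, inv_mul_cancel₀ hρ0.ne', Real.rpow_one]
  by_cases hx0 : ∀ i, x i = 0
  · have h1 : (fun ω => ⨆ i, x i / (b * S i ω ^ ρ)) = fun _ => (0:ℝ) := by
      funext ω
      simp [hx0, ciSup_const]
    have h2 : y = fun _ => 0 := by
      funext i
      show x i ^ (1/ρ) = 0
      rw [hx0 i]
      exact Real.zero_rpow (one_div_ne_zero hρ0.ne')
    rw [h1, h2, hℓ_zero, integral_zero, Real.zero_rpow (ne_of_gt hρ0)]
  push_neg at hx0
  obtain ⟨j, hj⟩ := hx0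
  have hxj : 0 < x j := lt_of_le_of_ne (hx j) (Ne.symm hj)
  set c : ℝ := ℓ y with hc_def
  have hc : 0 < c := lt_of_lt_of_le (Real.rpow_pos_of_pos hxj (1/ρ)) (hℓ_ge y hy0 j)
  -- facts about b
  have hd1 : (0:ℝ) ≤ (d:ℝ) - 1 := by
    have : (2:ℝ) ≤ (d:ℝ) := by exact_mod_cast hd
    linarith
  have hrint : IntegrableOn (fun s : ℝ => s ^ (-ρ)) (Set.Ioo (0:ℝ) 1) volume := by
    have h := intervalIntegral.intervalIntegrable_rpow' (a := 0) (b := 1) (by linarith : (-1:ℝ) < -ρ)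
    rwa [intervalIntegrable_iff_integrableOn_Ioo_of_le zero_le_one] at h
  have hGmeas : Measurable (fun s : ℝ => ((d:ℝ)-1) * (1-s)^(d-2) * s^(-ρ)) := by
    exact ((measurable_const.mul ((measurable_const.sub measurable_id).pow_const _)).mul
      (measurable_id.pow measurable_const))
  have hGint : IntegrableOn (fun s => ((d:ℝ)-1) * (1-s)^(d-2) * s^(-ρ))
      (Set.Ioo (0:ℝ) 1) volume := by
    apply Integrable.mono' (hrint.const_mul ((d:ℝ)-1)) hGmeas.aestronglyMeasurable
    filter_upwards [self_mem_ae_restrict (measurableSet_Ioo : MeasurableSet (Set.Ioo (0:ℝ) 1))]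
      with s hs
    have h1s : (0:ℝ) ≤ 1 - s := by linarith [hs.2]
    have hsr : (0:ℝ) ≤ s ^ (-ρ) := Real.rpow_nonneg hs.1.le _
    rw [Real.norm_eq_abs, abs_of_nonneg (by positivity)]
    have hle : (1-s)^(d-2) ≤ 1 := pow_le_one₀ h1s (by linarith [hs.1])
    calc ((d:ℝ)-1) * (1-s)^(d-2) * s^(-ρ) ≤ ((d:ℝ)-1) * 1 * s^(-ρ) := by
          apply mul_le_mul_of_nonneg_right _ hsr
          exact mul_le_mul_of_nonneg_left hle hd1
      _ = ((d:ℝ)-1) * s^(-ρ) := by ring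
  have hGsmallint : IntegrableOn (fun s : ℝ => ((d:ℝ)-1) * (1-s)^(d-2))
      (Set.Ioo (0:ℝ) 1) volume := by
    apply IntegrableOn.mono_set _ Set.Ioo_subset_Icc_self
    exact (Continuous.continuousOn (by continuity)).integrableOn_Icc
  have hcast : ((d-2:ℕ):ℝ) + 1 = (d:ℝ) - 1 := by
    have : ((d-2:ℕ):ℝ) = (d:ℝ) - 2 := by
      push_cast [Nat.cast_sub hd]
      ring
    rw [this]; ring
  have hd21 : d - 2 + 1 = d - 1 := by omega
  have hftc : ∀ a : ℝ, 0 ≤ a →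
      ∫ s in Set.Ioo (0:ℝ) a, (((d:ℝ)-1) * (1-s)^(d-2)) = 1 - (1-a)^(d-1) := by
    intro a ha
    have h := ftc_beta (d-2) ha
    rw [hcast, hd21] at h
    exact h
  have hb1 : (1:ℝ) ≤ b := by
    have h1 : ∫ s in Set.Ioo (0:ℝ) 1, (((d:ℝ)-1) * (1-s)^(d-2)) = 1 := by
      rw [hftc 1 zero_le_one]
      simp [Nat.sub_ne_zero_of_lt (by omega : 1 < d)]
    rw [← h1, hb]
    apply setIntegral_mono_on hGsmallint hGint measurableSet_Ioo
    intro s hs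
    have h1s : (0:ℝ) ≤ 1 - s := by linarith [hs.2]
    have hs1 : (1:ℝ) ≤ s ^ (-ρ) :=
      Real.one_le_rpow_of_pos_of_le_one_of_nonpos hs.1 hs.2.le (by linarith)
    exact le_mul_of_one_le_right (by positivity) hs1
  have hbpos : (0:ℝ) < b := lt_of_lt_of_le one_pos hb1
  set M : Ω → ℝ := fun ω => ⨆ i, y i / S i ω with hM_def
  have hMmeas : Measurable M :=
    Measurable.iSup (fun i => (hSmeas i).const_div (y i))
  have hMnn : ∀ᵐ ω ∂μ, 0 ≤ M ω := by
    filter_upwards [hT] with ω hω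
    exact le_trans (div_nonneg (hy0 j) (hω j).le)
      (le_ciSup (f := fun i => y i / S i ω) (Set.Finite.bddAbove (Set.finite_range _)) j)
  -- distribution of M
  have hMdist : ∀ u : ℝ, 0 < u →
      μ {ω | M ω < u} = ENNReal.ofReal (max 0 (1 - c/u) ^ (d-1)) := by
    intro u hu
    have hs0 : ∀ i, 0 ≤ y i / u := fun i => div_nonneg (hy0 i) hu.le
    have hsurv := hSsurv (fun i => y i / u) hs0
    rw [hℓ_hom y u hu, ← hc_def] at hsurv
    have hAeq : {ω | M ω < u} =ᵐ[μ] {ω | ∀ i, y i / u < S i ω} := by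
      rw [Filter.eventuallyEq_set]
      filter_upwards [hT] with ω hω
      change M ω < u ↔ ∀ i, y i / u < S i ω
      rw [show M ω = ⨆ i, y i / S i ω from rfl, iSup_fin_lt_iff]
      constructor
      · intro h i
        have h' := h i
        rw [div_lt_iff₀ (hω i)] at h'
        rw [div_lt_iff₀ hu]
        linarith
      · intro h i
        have h' := h i
        rw [div_lt_iff₀ hu] at h'
        rw [div_lt_iff₀ (hω i)]
        linarith
    rw [measure_congr hAeq, ← ENNReal.ofReal_toReal (measure_ne_top μ _), hsurv]
  -- the layer cake computation
  have hlint : ∫⁻ ω, ENNReal.ofReal (M ω ^ ρ) ∂μ = ENNReal.ofReal (c ^ ρ * b) := by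
    have hnn : 0 ≤ᵐ[μ] fun ω => M ω ^ ρ := by
      filter_upwards [hMnn] with ω h
      simp only [Pi.zero_apply]
      exact Real.rpow_nonneg h ρ
    rw [lintegral_eq_lintegral_meas_le μ hnn (hMmeas.pow measurable_const).aemeasurable]
    set K : Set (ℝ × ℝ) := {p : ℝ × ℝ | p.1 < (c / p.2) ^ ρ} with hK_def
    set F : ℝ → ℝ → ℝ≥0∞ := fun t s =>
      K.indicator (fun p => ENNReal.ofReal (((d:ℝ)-1) * (1-p.2)^(d-2))) (t, s) with hF_def
    have hKmem : ∀ t s : ℝ, ((t, s) ∈ K ↔ t < (c / s) ^ ρ) := by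
      intro t s
      rw [hK_def]
      simp
    -- Step 1: distribution identity
    have hstep1 : ∀ t ∈ Set.Ioi (0:ℝ),
        μ {ω | t ≤ M ω ^ ρ} = ∫⁻ s in Set.Ioo (0:ℝ) 1, F t s := by
      intro t ht
      have ht0 : (0:ℝ) < t := ht
      set u : ℝ := t ^ (1/ρ) with hu_def
      have hu : 0 < u := Real.rpow_pos_of_pos ht0 _
      have hut : u ^ ρ = t := by
        rw [hu_def, ← Real.rpow_mul ht0.le, one_div, inv_mul_cancel₀ hρ0.ne', Real.rpow_one]
      set m : ℝ := c / u with hm_def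
      have hm : 0 < m := div_pos hc hu
      -- left side
      have hcompl : {ω | t ≤ M ω ^ ρ} = {ω | M ω ^ ρ < t}ᶜ := by
        ext ω; simp [not_lt]
      have hms : MeasurableSet {ω | M ω ^ ρ < t} :=
        measurableSet_lt (hMmeas.pow measurable_const) measurable_const
      have h2 : {ω | M ω ^ ρ < t} =ᵐ[μ] {ω | M ω < u} := by
        rw [Filter.eventuallyEq_set]
        filter_upwards [hMnn] with ω hω
        change M ω ^ ρ < t ↔ M ω < u
        rw [← hut]
        exact Real.rpow_lt_rpow_iff hω hu.le hρ0
      -- right side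
      have hcond : ∀ s : ℝ, s ∈ Set.Ioo (0:ℝ) 1 →
          F t s = (Set.Iio m).indicator (fun s => ENNReal.ofReal (((d:ℝ)-1) * (1-s)^(d-2))) s := by
        intro s hs
        have hiff : t < (c/s)^ρ ↔ s < m := by
          have h1 : t < (c/s)^ρ ↔ u < c/s := by
            rw [← hut]
            exact Real.rpow_lt_rpow_iff hu.le (div_pos hc hs.1).le hρ0
          rw [h1, lt_div_iff₀ hs.1, hm_def, lt_div_iff₀ hu, mul_comm]
        rw [hF_def]
        simp only [Set.indicator_apply, Set.mem_Iio, hKmem t s, hiff]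
      rw [setLIntegral_congr_fun measurableSet_Ioo (fun s hs => hcond s hs)]
      rw [lintegral_indicator measurableSet_Iio, Measure.restrict_restrict measurableSet_Iio]
      have hseteq : Set.Iio m ∩ Set.Ioo 0 1 = Set.Ioo (0:ℝ) (min m 1) := by
        ext z
        simp only [Set.mem_inter_iff, Set.mem_Iio, Set.mem_Ioo, lt_min_iff]
        tauto
      rw [hseteq]
      have hintOn : IntegrableOn (fun s : ℝ => ((d:ℝ)-1) * (1-s)^(d-2))
          (Set.Ioo (0:ℝ) (min m 1)) volume :=
        hGsmallint.mono_set (Set.Ioo_subset_Ioo_right (min_le_right m 1))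
      have hnnG : 0 ≤ᵐ[volume.restrict (Set.Ioo (0:ℝ) (min m 1))]
          fun s : ℝ => ((d:ℝ)-1) * (1-s)^(d-2) := by
        filter_upwards [self_mem_ae_restrict
          (measurableSet_Ioo : MeasurableSet (Set.Ioo (0:ℝ) (min m 1)))] with s hs
        have : s < 1 := lt_of_lt_of_le hs.2 (min_le_right m 1)
        have h1s : (0:ℝ) ≤ 1 - s := by linarith
        positivity
      rw [← ofReal_integral_eq_lintegral_ofReal hintOn hnnG,
        hftc (min m 1) (le_min hm.le zero_le_one)]
      -- now pure arithmetic with ENNReal.ofReal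
      rw [hcompl, prob_compl_eq_one_sub hms, measure_congr h2, hMdist u hu]
      have hqeq : (1:ℝ) - min m 1 = max 0 (1 - m) := by
        rcases le_total m 1 with h | h
        · rw [min_eq_left h, max_eq_right (by linarith)]
        · rw [min_eq_right h, max_eq_left (by linarith)]
          ring
      rw [hqeq]
      have hq0 : (0:ℝ) ≤ max 0 (1 - m) ^ (d-1) := by positivity
      rw [show (1:ℝ≥0∞) - ENNReal.ofReal (max 0 (1 - m) ^ (d-1))
          = ENNReal.ofReal (1 - max 0 (1 - m) ^ (d-1)) from by
        rw [ENNReal.ofReal_sub _ hq0, ENNReal.ofReal_one]]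
    rw [setLIntegral_congr_fun measurableSet_Ioi (fun t ht => hstep1 t ht)]
    -- Step 2: Tonelli
    have hK : MeasurableSet K := by
      rw [hK_def]
      exact measurableSet_lt measurable_fst
        ((measurable_const.div measurable_snd).pow measurable_const)
    have hFmeas : AEMeasurable (Function.uncurry F)
        ((volume.restrict (Set.Ioi (0:ℝ))).prod (volume.restrict (Set.Ioo (0:ℝ) 1))) := by
      apply Measurable.aemeasurable
      have hg : Measurable (fun p : ℝ × ℝ => ENNReal.ofReal (((d:ℝ)-1) * (1-p.2)^(d-2))) :=
        Measurable.ennreal_ofReal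
          (measurable_const.mul ((measurable_const.sub measurable_snd).pow_const _))
      have huncurry : Function.uncurry F
          = K.indicator (fun p => ENNReal.ofReal (((d:ℝ)-1) * (1-p.2)^(d-2))) := by
        funext p
        rw [Function.uncurry_def, hF_def]
      rw [huncurry]
      exact hg.indicator hK
    rw [lintegral_lintegral_swap hFmeas]
    -- Step 3: inner integral in t
    have hstep3 : ∀ s ∈ Set.Ioo (0:ℝ) 1, ∫⁻ t in Set.Ioi (0:ℝ), F t s
        = ENNReal.ofReal (c ^ ρ) * ENNReal.ofReal (((d:ℝ)-1) * (1-s)^(d-2) * s^(-ρ)) := by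
      intro s hs
      have hA : (0:ℝ) < (c/s)^ρ := Real.rpow_pos_of_pos (div_pos hc hs.1) _
      have h1s : (0:ℝ) ≤ 1 - s := by linarith [hs.2]
      have h1 : ∀ t : ℝ, F t s
          = (Set.Iio ((c/s)^ρ)).indicator (fun _ => ENNReal.ofReal (((d:ℝ)-1) * (1-s)^(d-2))) t := by
        intro t
        rw [hF_def]
        simp only [Set.indicator_apply, Set.mem_Iio, hKmem t s]
      simp_rw [h1]
      rw [lintegral_indicator measurableSet_Iio, Measure.restrict_restrict measurableSet_Iio,
        setLIntegral_const]
      have hseteq : Set.Iio ((c/s)^ρ) ∩ Set.Ioi 0 = Set.Ioo (0:ℝ) ((c/s)^ρ) := by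
        ext z
        simp only [Set.mem_inter_iff, Set.mem_Iio, Set.mem_Ioi, Set.mem_Ioo]
        tauto
      rw [hseteq, Real.volume_Ioo, sub_zero]
      have hAeq : (c/s)^ρ = c^ρ * s^(-ρ) := by
        rw [Real.div_rpow hc.le hs.1.le, Real.rpow_neg hs.1.le, div_eq_mul_inv]
      rw [hAeq, ← ENNReal.ofReal_mul (by positivity), ← ENNReal.ofReal_mul (by positivity)]
      congr 1
      ring
    rw [setLIntegral_congr_fun measurableSet_Ioo (fun s hs => hstep3 s hs)]
    rw [lintegral_const_mul' _ _ ENNReal.ofReal_ne_top]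
    have hnnb : 0 ≤ᵐ[volume.restrict (Set.Ioo (0:ℝ) 1)]
        fun s : ℝ => ((d:ℝ)-1) * (1-s)^(d-2) * s^(-ρ) := by
      filter_upwards [self_mem_ae_restrict
        (measurableSet_Ioo : MeasurableSet (Set.Ioo (0:ℝ) 1))] with s hs
      have h1s : (0:ℝ) ≤ 1 - s := by linarith [hs.2]
      have hsr : (0:ℝ) ≤ s ^ (-ρ) := Real.rpow_nonneg hs.1.le _
      positivity
    rw [← ofReal_integral_eq_lintegral_ofReal hGint hnnb, ← hb,
      ← ENNReal.ofReal_mul (by positivity)]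
  have hint : ∫ ω, M ω ^ ρ ∂μ = c ^ ρ * b := by
    have hmble : AEStronglyMeasurable (fun ω => M ω ^ ρ) μ :=
      (hMmeas.pow measurable_const).aestronglyMeasurable
    have hnn : 0 ≤ᵐ[μ] fun ω => M ω ^ ρ := by
      filter_upwards [hMnn] with ω h
      simp only [Pi.zero_apply]
      exact Real.rpow_nonneg h ρ
    rw [integral_eq_lintegral_of_nonneg_ae hnn hmble, hlint,
      ENNReal.toReal_ofReal (by positivity)]
  have hcongr : (fun ω => ⨆ i, x i / (b * S i ω ^ ρ)) =ᵐ[μ] fun ω => b⁻¹ * (M ω ^ ρ) := by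
    filter_upwards [hT] with ω hω
    have h1 : ∀ i, x i / (b * S i ω ^ ρ) = b⁻¹ * ((y i / S i ω) ^ ρ) := by
      intro i
      rw [Real.div_rpow (hy0 i) (hω i).le, hyx i]
      field_simp
    simp_rw [h1]
    rw [← Real.mul_iSup_of_nonneg (by positivity), hM_def,
      iSup_fin_rpow (fun i => div_nonneg (hy0 i) (hω i).le) hρ0.le]
  rw [integral_congr_ae hcongr, integral_const_mul, hint,
    mul_comm (c ^ ρ) b, ← mul_assoc, inv_mul_cancel₀ hbpos.ne', one_mul]
end
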